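/- arXiv:1304.2629 — 6 statements merged into one kernel-verified Lean document; each statement's English description precedes it below -/
import Mathlib

section
/- Let 0 ≤ ρ₂ < ρ₁ ≤ π, let γ be a closed curve on S² whose radius of curvature satisfies ρ₂ < ρ(t) < ρ₁ for all t, and let θ ∈ [ρ₁ − π, ρ₂]. Then the translated curve γ_θ(t) = cos θ · γ(t) + sin θ · n(t) is a regular closed curve; its velocity is γ_θ'(t) = (|γ'(t)| sin(ρ(t) − θ)/sin ρ(t)) · t(t), which is a positive multiple of t(t); its unit tangent equals t(t) and its unit normal equals −sin θ · γ(t) + cos θ · n(t). Equivalently, the frame Φ_{γ_θ}(t) (the 3×3 matrix with columns γ_θ(t), t_{γ_θ}(t), n_{γ_θ}(t)) equals Φ_γ(t) · R_θ, where R_θ is the matrix with rows (cos θ, 0, −sin θ), (0, 1, 0), (sin θ, 0, cos θ). -/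
noncomputable section

open Real Set Filter
open scoped RealInnerProductSpace

abbrev E3 := EuclideanSpace ℝ (Fin 3)

/-- The cross product on `ℝ³`. -/
def cross3 (u v : E3) : E3 :=
  (WithLp.equiv 2 (Fin 3 → ℝ)).symm
    ![u 1 * v 2 - u 2 * v 1, u 2 * v 0 - u 0 * v 2, u 0 * v 1 - u 1 * v 0]

/-- Unit tangent vector of a curve. -/
def unitTan (γ : ℝ → E3) (t : ℝ) : E3 := ‖deriv γ t‖⁻¹ • deriv γ t

/-- Unit normal vector of a spherical curve. -/
def unitNor (γ : ℝ → E3) (t : ℝ) : E3 := cross3 (γ t) (unitTan γ t)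

/-- Geodesic curvature of a spherical curve. -/
def geodCurv (γ : ℝ → E3) (t : ℝ) : ℝ :=
  ⟪deriv (unitTan γ) t, unitNor γ t⟫ / ‖deriv γ t‖

/-- Radius of curvature: `arccot` of the geodesic curvature, valued in `(0, π)`. -/
def radCurv (γ : ℝ → E3) (t : ℝ) : ℝ := π / 2 - arctan (geodCurv γ t)

/-- A closed curve on the sphere `S²`: a `C²`, 1-periodic, regular map into the unit sphere. -/
def IsClosedCurve (γ : ℝ → E3) : Prop :=
  ContDiff ℝ 2 γ ∧ Function.Periodic γ 1 ∧ ∀ t, ‖γ t‖ = 1 ∧ deriv γ t ≠ 0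

/-- Homotopy of closed spherical curves through closed curves whose radius
of curvature takes values in `(ρ₂, ρ₁)`. -/
def HomotopicIn (ρ₂ ρ₁ : ℝ) (γ₀ γ₁ : ℝ → E3) : Prop :=
  ∃ H : ℝ → ℝ → E3,
    H 0 = γ₀ ∧ H 1 = γ₁ ∧
    (∀ s ∈ Icc (0:ℝ) 1, IsClosedCurve (H s) ∧ ∀ t, radCurv (H s) t ∈ Ioo ρ₂ ρ₁) ∧
    ContinuousOn (fun p : ℝ × ℝ => H p.1 p.2) (Icc 0 1 ×ˢ univ) ∧
    ContinuousOn (fun p : ℝ × ℝ => deriv (H p.1) p.2) (Icc 0 1 ×ˢ univ) ∧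
    ContinuousOn (fun p : ℝ × ℝ => deriv (deriv (H p.1)) p.2) (Icc 0 1 ×ˢ univ)

/-- `σ` is a circle traversed `k` times with radius of curvature `α`. -/
def IsCircleTraversed (k : ℕ) (α : ℝ) (σ : ℝ → E3) : Prop :=
  α ∈ Ioo (0:ℝ) π ∧
  ∃ R : Matrix (Fin 3) (Fin 3) ℝ, R.transpose * R = 1 ∧ R.det = 1 ∧
    ∀ t, σ t = (WithLp.equiv 2 (Fin 3 → ℝ)).symm
      (R.mulVec ![sin α * cos (2 * π * k * t), sin α * sin (2 * π * k * t), cos α])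

/-- Caustic band / translation formula. -/
def caustic (γ : ℝ → E3) (t θ : ℝ) : E3 :=
  Real.cos θ • γ t + Real.sin θ • unitNor γ t

/-- The frame of a spherical curve: the matrix with columns `γ(t)`, `t(t)`, `n(t)`. -/
def frameM (γ : ℝ → E3) (t : ℝ) : Matrix (Fin 3) (Fin 3) ℝ :=
  Matrix.of fun i j => ![γ t, unitTan γ t, unitNor γ t] j i

lemma cross3_apply (u v : E3) (i : Fin 3) :
    cross3 u v i = ![u 1 * v 2 - u 2 * v 1, u 2 * v 0 - u 0 * v 2, u 0 * v 1 - u 1 * v 0] i := rfl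

lemma inner3 (u v : E3) : ⟪u, v⟫ = u 0 * v 0 + u 1 * v 1 + u 2 * v 2 := by
  simp [PiLp.inner_apply, Fin.sum_univ_three, mul_comm]

lemma triple (u v w : E3) : cross3 u (cross3 v w) = ⟪u,w⟫ • v - ⟪u,v⟫ • w := by
  ext i
  fin_cases i <;>
    simp [cross3_apply, inner3, Fin.sum_univ_three, PiLp.smul_apply, PiLp.sub_apply, smul_eq_mul] <;> ring

lemma anticomm (u v : E3) : cross3 u v = - cross3 v u := by
  ext i
  fin_cases i <;> simp [cross3_apply, PiLp.neg_apply] <;> ring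

lemma inner_cross_self (u v : E3) :
    ⟪cross3 u v, cross3 u v⟫ = ⟪u,u⟫ * ⟪v,v⟫ - ⟪u,v⟫ ^ 2 := by
  simp only [inner3, cross3_apply]
  simp [Matrix.cons_val_zero, Matrix.cons_val_one]
  ring

lemma inner_cross_left (u v : E3) : ⟪cross3 u v, u⟫ = 0 := by
  simp only [inner3, cross3_apply]; simp; ring

lemma inner_cross_right (u v : E3) : ⟪cross3 u v, v⟫ = 0 := by
  simp only [inner3, cross3_apply]; simp; ring

lemma cross3_smul_add_smul (a b : ℝ) (u v w : E3) :
    cross3 (a • u + b • v) w = a • cross3 u w + b • cross3 v w := by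
  ext i
  fin_cases i <;>
    simp [cross3_apply, PiLp.add_apply, PiLp.smul_apply, smul_eq_mul] <;> ring

lemma cross3_smul_sub_smul_right (a b : ℝ) (u v w : E3) :
    cross3 u (a • v - b • w) = a • cross3 u v - b • cross3 u w := by
  ext i
  fin_cases i <;>
    simp [cross3_apply, PiLp.sub_apply, PiLp.smul_apply, smul_eq_mul] <;> ring

lemma cross_n_a (a b : E3) (ha : ⟪a,a⟫ = 1) (hab : ⟪a,b⟫ = 0) :
    cross3 (cross3 a b) a = b := by
  rw [anticomm, triple, ha, hab]; simp

lemma cross_n_b (a b : E3) (hb : ⟪b,b⟫ = 1) (hab : ⟪a,b⟫ = 0) :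
    cross3 (cross3 a b) b = -a := by
  have hba : ⟪b,a⟫ = (0:ℝ) := by rw [real_inner_comm]; exact hab
  rw [anticomm, triple, hb, hba]; simp

lemma expand3 (a b w : E3) (ha : ⟪a,a⟫ = 1) (hb : ⟪b,b⟫ = 1) (hab : ⟪a,b⟫ = 0) :
    w = ⟪w,a⟫ • a + ⟪w,b⟫ • b + ⟪w, cross3 a b⟫ • cross3 a b := by
  set n := cross3 a b with hn
  have hnn : ⟪n,n⟫ = 1 := by rw [hn, inner_cross_self, ha, hb, hab]; ring
  have h2 : cross3 n w = ⟪w,a⟫ • b - ⟪w,b⟫ • a := by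
    rw [anticomm, triple]; abel
  have h1 : cross3 n (cross3 n w) = ⟪n,w⟫ • n - w := by rw [triple, hnn]; simp
  rw [h2, cross3_smul_sub_smul_right, hn, cross_n_b a b hb hab, cross_n_a a b ha hab, ← hn] at h1
  rw [real_inner_comm n w]
  linear_combination (norm := module) h1

lemma cross3_add_left (u v w : E3) : cross3 (u + v) w = cross3 u w + cross3 v w := by
  ext i; fin_cases i <;> simp [cross3_apply, PiLp.add_apply] <;> ring

lemma cross3_smul_left (c : ℝ) (u w : E3) : cross3 (c • u) w = c • cross3 u w := by
  ext i; fin_cases i <;> simp [cross3_apply, PiLp.smul_apply, smul_eq_mul] <;> ring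

lemma cross3_add_right (u v w : E3) : cross3 u (v + w) = cross3 u v + cross3 u w := by
  ext i; fin_cases i <;> simp [cross3_apply, PiLp.add_apply] <;> ring

lemma cross3_smul_right (c : ℝ) (u w : E3) : cross3 u (c • w) = c • cross3 u w := by
  ext i; fin_cases i <;> simp [cross3_apply, PiLp.smul_apply, smul_eq_mul] <;> ring

def cross3L : E3 →ₗ[ℝ] E3 →ₗ[ℝ] E3 where
  toFun u :=
    { toFun := fun v => cross3 u v
      map_add' := cross3_add_right u
      map_smul' := fun c v => cross3_smul_right c u v }
  map_add' u v := by ext w; simp [cross3_add_left]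
  map_smul' c u := by ext w; simp [cross3_smul_left]

def cross3C : E3 →L[ℝ] E3 →L[ℝ] E3 :=
  LinearMap.toContinuousLinearMap
    { toFun := fun u => LinearMap.toContinuousLinearMap (cross3L u)
      map_add' := fun u v => by ext w; simp [cross3L, cross3_add_left]
      map_smul' := fun c u => by ext w; simp [cross3L, cross3_smul_left] }

@[simp] lemma cross3C_apply (u v : E3) : cross3C u v = cross3 u v := rfl

lemma cross3_self (u : E3) : cross3 u u = 0 := by
  ext i; fin_cases i <;> simp [cross3_apply] <;> ring

lemma hasDerivAt_cross3 {f g : ℝ → E3} {f' g' : E3} {x : ℝ}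
    (hf : HasDerivAt f f' x) (hg : HasDerivAt g g' x) :
    HasDerivAt (fun t => cross3 (f t) (g t)) (cross3 f' (g x) + cross3 (f x) g') x := by
  have h := (cross3C.hasFDerivAt.comp_hasDerivAt x hf).clm_apply hg
  simpa using h

lemma deriv_c2 {f : ℝ → E3} (h : ContDiff ℝ 2 f) : ContDiff ℝ 1 (deriv f) :=
  (contDiff_succ_iff_deriv.mp (show ContDiff ℝ (1+1) f from by norm_num [h])).2.2


lemma unitTan_def (γ : ℝ → E3) (s : ℝ) : unitTan γ s = ‖deriv γ s‖⁻¹ • deriv γ s := rfl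
lemma unitNor_def (γ : ℝ → E3) (s : ℝ) : unitNor γ s = cross3 (γ s) (unitTan γ s) := rfl

/-- The translation `γ_θ = cos θ · γ + sin θ · n` of a closed curve with
radius of curvature in `(ρ₂, ρ₁)`, for `θ ∈ [ρ₁ − π, ρ₂]`, is a regular closed curve; its
velocity is the stated positive multiple of `t(t)`, its unit tangent is `t(t)`, its unit
normal is `−sin θ · γ + cos θ · n`, and its frame is `Φ_γ · R_θ`. -/
theorem translation_is_regular (ρ₂ ρ₁ θ : ℝ) (hρ₂ : 0 ≤ ρ₂) (hρ : ρ₂ < ρ₁) (hρ₁ : ρ₁ ≤ π)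
    (γ : ℝ → E3) (hγ : IsClosedCurve γ) (hrad : ∀ t, radCurv γ t ∈ Ioo ρ₂ ρ₁)
    (hθ : θ ∈ Icc (ρ₁ - π) ρ₂) :
    ContDiff ℝ 1 (fun t => caustic γ t θ) ∧
    Function.Periodic (fun t => caustic γ t θ) 1 ∧
    ∀ t, ‖caustic γ t θ‖ = 1 ∧
      deriv (fun t' => caustic γ t' θ) t
        = (‖deriv γ t‖ * Real.sin (radCurv γ t - θ) / Real.sin (radCurv γ t))
            • unitTan γ t ∧
      0 < ‖deriv γ t‖ * Real.sin (radCurv γ t - θ) / Real.sin (radCurv γ t) ∧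
      unitTan (fun t' => caustic γ t' θ) t = unitTan γ t ∧
      unitNor (fun t' => caustic γ t' θ) t
        = (-Real.sin θ) • γ t + Real.cos θ • unitNor γ t ∧
      frameM (fun t' => caustic γ t' θ) t
        = frameM γ t * !![Real.cos θ, 0, -Real.sin θ; 0, 1, 0; Real.sin θ, 0, Real.cos θ] := by
  obtain ⟨hsm, hper, hsp⟩ := hγ
  have hone : ∀ s, ‖γ s‖ = 1 := fun s => (hsp s).1
  have hreg : ∀ s, deriv γ s ≠ 0 := fun s => (hsp s).2
  have hdiff : Differentiable ℝ γ := hsm.differentiable two_ne_zero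
  have hw1 : ContDiff ℝ 1 (deriv γ) := deriv_c2 hsm
  have hv : ∀ s, (0:ℝ) < ‖deriv γ s‖ := fun s => norm_pos_iff.mpr (hreg s)
  have hvne : ∀ s, ‖deriv γ s‖ ≠ 0 := fun s => (hv s).ne'
  have hT1 : ContDiff ℝ 1 (unitTan γ) := ((hw1.norm ℝ hreg).inv hvne).smul hw1
  have hTd : Differentiable ℝ (unitTan γ) := hT1.differentiable one_ne_zero
  have hTnorm : ∀ s, ‖unitTan γ s‖ = 1 := by
    intro s
    rw [unitTan_def, norm_smul, norm_inv, norm_norm, inv_mul_cancel₀ (hvne s)]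
  have hN1 : ContDiff ℝ 1 (unitNor γ) := by
    have h : ContDiff ℝ 1 fun s => cross3C (γ s) (unitTan γ s) :=
      (cross3C.contDiff.comp (hsm.of_le one_le_two)).clm_apply hT1
    exact h
  have hγγ : ∀ s, ⟪γ s, γ s⟫ = 1 := by
    intro s; rw [real_inner_self_eq_norm_sq, hone s]; norm_num
  have hγw : ∀ s, ⟪γ s, deriv γ s⟫ = 0 := by
    intro s
    have h1 : HasDerivAt (fun u => ⟪γ u, γ u⟫) (⟪γ s, deriv γ s⟫ + ⟪deriv γ s, γ s⟫) s :=
      (hdiff s).hasDerivAt.inner ℝ (hdiff s).hasDerivAt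
    rw [funext hγγ] at h1
    have h3 := h1.unique (hasDerivAt_const s 1)
    have h4 : ⟪deriv γ s, γ s⟫ = ⟪γ s, deriv γ s⟫ := real_inner_comm _ _
    linarith
  have hγT : ∀ s, ⟪γ s, unitTan γ s⟫ = 0 := by
    intro s; rw [unitTan_def, real_inner_smul_right, hγw s, mul_zero]
  have hTT : ∀ s, ⟪unitTan γ s, unitTan γ s⟫ = 1 := by
    intro s; rw [real_inner_self_eq_norm_sq, hTnorm s]; norm_num
  have hwT : ∀ s, deriv γ s = ‖deriv γ s‖ • unitTan γ s := by
    intro s; rw [unitTan_def, smul_smul, mul_inv_cancel₀ (hvne s), one_smul]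
  have hT'T : ∀ s, ⟪deriv (unitTan γ) s, unitTan γ s⟫ = 0 := by
    intro s
    have h1 : HasDerivAt (fun u => ⟪unitTan γ u, unitTan γ u⟫)
        (⟪unitTan γ s, deriv (unitTan γ) s⟫ + ⟪deriv (unitTan γ) s, unitTan γ s⟫) s :=
      (hTd s).hasDerivAt.inner ℝ (hTd s).hasDerivAt
    rw [funext hTT] at h1
    have h3 := h1.unique (hasDerivAt_const s 1)
    have h4 : ⟪unitTan γ s, deriv (unitTan γ) s⟫ = ⟪deriv (unitTan γ) s, unitTan γ s⟫ :=
      real_inner_comm _ _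
    linarith
  have hT'γ : ∀ s, ⟪deriv (unitTan γ) s, γ s⟫ = -‖deriv γ s‖ := by
    intro s
    have h1 : HasDerivAt (fun u => ⟪unitTan γ u, γ u⟫)
        (⟪unitTan γ s, deriv γ s⟫ + ⟪deriv (unitTan γ) s, γ s⟫) s :=
      (hTd s).hasDerivAt.inner ℝ (hdiff s).hasDerivAt
    have h2 : (fun u => (⟪unitTan γ u, γ u⟫ : ℝ)) = fun _ => 0 :=
      funext fun u => by rw [real_inner_comm]; exact hγT u
    rw [h2] at h1
    have h3 := h1.unique (hasDerivAt_const s 0)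
    have h5 : ⟪unitTan γ s, deriv γ s⟫ = ‖deriv γ s‖ := by
      rw [unitTan_def, real_inner_smul_left, real_inner_self_eq_norm_sq, sq]
      rw [← mul_assoc, inv_mul_cancel₀ (hvne s), one_mul]
    linarith
  have hT'N : ∀ s, ⟪deriv (unitTan γ) s, unitNor γ s⟫ = geodCurv γ s * ‖deriv γ s‖ := by
    intro s; rw [geodCurv, div_mul_cancel₀ _ (hvne s)]
  have hT'exp : ∀ s, deriv (unitTan γ) s
      = (-‖deriv γ s‖) • γ s + (geodCurv γ s * ‖deriv γ s‖) • unitNor γ s := by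
    intro s
    have h := expand3 (γ s) (unitTan γ s) (deriv (unitTan γ) s) (hγγ s) (hTT s) (hγT s)
    rw [← unitNor_def, hT'γ s, hT'T s, hT'N s] at h
    simpa using h
  have hNder : ∀ s, HasDerivAt (unitNor γ)
      ((-(geodCurv γ s * ‖deriv γ s‖)) • unitTan γ s) s := by
    intro s
    have h := hasDerivAt_cross3 (hdiff s).hasDerivAt (hTd s).hasDerivAt
    have e1 : cross3 (deriv γ s) (unitTan γ s) = 0 := by
      rw [hwT s, cross3_smul_left, cross3_self, smul_zero]
    have e2 : cross3 (γ s) (deriv (unitTan γ) s)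
        = (-(geodCurv γ s * ‖deriv γ s‖)) • unitTan γ s := by
      rw [hT'exp s, show (-‖deriv γ s‖) • γ s + (geodCurv γ s * ‖deriv γ s‖) • unitNor γ s
          = (geodCurv γ s * ‖deriv γ s‖) • unitNor γ s - ‖deriv γ s‖ • γ s by module,
        cross3_smul_sub_smul_right, cross3_self, unitNor_def, triple, hγT s, hγγ s]
      module
    rw [e1, zero_add, e2] at h
    have e3 : (fun t => cross3 (γ t) (unitTan γ t)) = unitNor γ := by
      funext u; rw [unitNor_def]
    rwa [e3] at h
  have hsinρpos : ∀ s, 0 < Real.sin (radCurv γ s) := by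
    intro s
    exact Real.sin_pos_of_pos_of_lt_pi (lt_of_le_of_lt hρ₂ (hrad s).1)
      (lt_of_lt_of_le (hrad s).2 hρ₁)
  have hcosρ : ∀ s, Real.cos (radCurv γ s) = geodCurv γ s * Real.sin (radCurv γ s) := by
    intro s
    rw [radCurv, Real.cos_pi_div_two_sub, Real.sin_arctan, Real.sin_pi_div_two_sub,
      Real.cos_arctan]
    ring
  have hfac : ∀ s, ‖deriv γ s‖ * Real.sin (radCurv γ s - θ) / Real.sin (radCurv γ s)
      = ‖deriv γ s‖ * (Real.cos θ - geodCurv γ s * Real.sin θ) := by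
    intro s
    rw [Real.sin_sub, hcosρ s]
    field_simp [(hsinρpos s).ne']
  have hpos : ∀ s, 0 < ‖deriv γ s‖ * Real.sin (radCurv γ s - θ) / Real.sin (radCurv γ s) := by
    intro s
    apply div_pos (mul_pos (hv s) _) (hsinρpos s)
    apply Real.sin_pos_of_pos_of_lt_pi
    · have := (hrad s).1; have := hθ.2; linarith
    · have := (hrad s).2; have := hθ.1; linarith
  have hca : ∀ s, HasDerivAt (fun t' => caustic γ t' θ)
      ((‖deriv γ s‖ * Real.sin (radCurv γ s - θ) / Real.sin (radCurv γ s)) • unitTan γ s) s := by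
    intro s
    have h := (HasDerivAt.const_smul (Real.cos θ) (hdiff s).hasDerivAt).add
      (HasDerivAt.const_smul (Real.sin θ) (hNder s))
    have he : (Real.cos θ • γ + Real.sin θ • unitNor γ)
        = fun t' => caustic γ t' θ := rfl
    rw [he] at h
    refine h.congr_deriv (Eq.symm ?_)
    rw [hfac s]
    linear_combination (norm := module) (-Real.cos θ : ℝ) • hwT s
  have hNγ : ∀ s, ⟪γ s, unitNor γ s⟫ = 0 := by
    intro s; rw [real_inner_comm, unitNor_def]; exact inner_cross_left _ _
  have hNN : ∀ s, ⟪unitNor γ s, unitNor γ s⟫ = 1 := by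
    intro s
    rw [unitNor_def, inner_cross_self, hγγ s, hTT s, hγT s]
    norm_num
  have hcnorm : ∀ s, ‖caustic γ s θ‖ = 1 := by
    intro s
    have h : ⟪caustic γ s θ, caustic γ s θ⟫ = 1 := by
      rw [caustic, real_inner_add_add_self, real_inner_smul_left, real_inner_smul_left,
        real_inner_smul_left, real_inner_smul_right, real_inner_smul_right,
        real_inner_smul_right, hγγ s, hNN s, hNγ s]
      nlinarith [Real.sin_sq_add_cos_sq θ]
    rw [norm_eq_sqrt_real_inner, h, Real.sqrt_one]
  have hct : ∀ s, unitTan (fun t' => caustic γ t' θ) s = unitTan γ s := by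
    intro s
    rw [unitTan_def, (hca s).deriv, norm_smul, hTnorm s, mul_one, Real.norm_eq_abs,
      abs_of_pos (hpos s), smul_smul, inv_mul_cancel₀ (hpos s).ne', one_smul]
  have hcn : ∀ s, unitNor (fun t' => caustic γ t' θ) s
      = (-Real.sin θ) • γ s + Real.cos θ • unitNor γ s := by
    intro s
    rw [unitNor_def, hct s]
    show cross3 (caustic γ s θ) (unitTan γ s) = _
    rw [caustic, cross3_smul_add_smul, ← unitNor_def]
    have h2 : cross3 (unitNor γ s) (unitTan γ s) = -(γ s) := by
      rw [unitNor_def]; exact cross_n_b _ _ (hTT s) (hγT s)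
    rw [h2]
    module
  refine ⟨?_, ?_, fun t => ⟨hcnorm t, (hca t).deriv, hpos t, hct t, hcn t, ?_⟩⟩
  · have h : ContDiff ℝ 1 (fun t => Real.cos θ • γ t + Real.sin θ • unitNor γ t) :=
      ((hsm.of_le one_le_two).const_smul (Real.cos θ)).add (hN1.const_smul (Real.sin θ))
    exact h
  · have hwper : Function.Periodic (deriv γ) 1 := by
      intro s
      have h1 : deriv (fun u => γ (u + 1)) s = deriv γ (s + 1) := deriv_comp_add_const γ 1 s
      rw [← h1, show (fun u => γ (u + 1)) = γ from funext fun u => hper u]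
    have hTper : Function.Periodic (unitTan γ) 1 := fun s => by
      rw [unitTan_def, unitTan_def, hwper s]
    have hNper : Function.Periodic (unitNor γ) 1 := fun s => by
      rw [unitNor_def, unitNor_def, hTper s, hper s]
    intro s
    simp only [caustic, hper s, hNper s]
  · ext i j
    simp only [frameM, Matrix.of_apply]
    rw [hct t, hcn t]
    fin_cases i <;> fin_cases j <;>
      simp [caustic, Matrix.mul_apply, Fin.sum_univ_three, PiLp.add_apply,
        PiLp.smul_apply, PiLp.neg_apply, smul_eq_mul] <;> ring
end
end

section
/- Let 0 ≤ ρ₂ < ρ₁ ≤ π, let γ be a closed curve on S² whose radius of curvature satisfies ρ₂ < ρ(t) < ρ₁ for all t, and let θ ∈ [ρ₁ − π, ρ₂]. Then the radius of curvature ρ̄ of the translated curve γ_θ(t) = cos θ · γ(t) + sin θ · n(t) satisfies ρ̄(t) = ρ(t) − θ for every t; equivalently, the geodesic curvature of γ_θ at γ_θ(t) equals cot(ρ(t) − θ). -/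
noncomputable section

open Real Set Filter
open scoped RealInnerProductSpace

lemma cross3_apply0 (u v : E3) : cross3 u v 0 = u 1 * v 2 - u 2 * v 1 := by simp [cross3]
lemma cross3_apply1 (u v : E3) : cross3 u v 1 = u 2 * v 0 - u 0 * v 2 := by simp [cross3]
lemma cross3_apply2 (u v : E3) : cross3 u v 2 = u 0 * v 1 - u 1 * v 0 := by simp [cross3]
lemma E3ext {u v : E3} (h0 : u 0 = v 0) (h1 : u 1 = v 1) (h2 : u 2 = v 2) : u = v := by
  ext i; fin_cases i <;> assumption

lemma cross_eq (g T w : E3) (hT : ⟪T,T⟫ = 1) (hgT : ⟪g,T⟫ = 0) :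
    cross3 g w = ⟪w,T⟫ • cross3 g T - ⟪w, cross3 g T⟫ • T := by
  rw [inner3] at hT hgT
  apply E3ext <;>
    simp only [PiLp.sub_apply, PiLp.smul_apply, smul_eq_mul, inner3,
      cross3_apply0, cross3_apply1, cross3_apply2]
  · linear_combination (g 2 * w 1 - g 1 * w 2) * hT + (-(T 2 * w 1) + T 1 * w 2) * hgT
  · linear_combination (-(g 2 * w 0) + g 0 * w 2) * hT + (T 2 * w 0 - T 0 * w 2) * hgT
  · linear_combination (g 1 * w 0 - g 0 * w 1) * hT + (-(T 1 * w 0) + T 0 * w 1) * hgT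

lemma cross_combo (g T : E3) (hT : ⟪T,T⟫ = 1) (hgT : ⟪g,T⟫ = 0) (a b : ℝ) :
    cross3 (a • g + b • cross3 g T) T = a • cross3 g T - b • g := by
  rw [inner3] at hT hgT
  apply E3ext <;>
    simp only [PiLp.sub_apply, PiLp.add_apply, PiLp.smul_apply, smul_eq_mul,
      cross3_apply0, cross3_apply1, cross3_apply2]
  · linear_combination (-(b * g 0)) * hT + (b * T 0) * hgT
  · linear_combination (-(b * g 1)) * hT + (b * T 1) * hgT
  · linear_combination (-(b * g 2)) * hT + (b * T 2) * hgT

lemma cross_smul_self (c : ℝ) (u : E3) : cross3 (c • u) u = 0 := by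
  apply E3ext <;>
    simp only [cross3_apply0, cross3_apply1, cross3_apply2, PiLp.smul_apply, smul_eq_mul,
      PiLp.zero_apply] <;> ring

lemma inner_cross_left_s7 (g T : E3) : ⟪cross3 g T, g⟫ = 0 := by
  simp only [inner3, cross3_apply0, cross3_apply1, cross3_apply2]; ring
lemma inner_cross_right_s7 (g T : E3) : ⟪cross3 g T, T⟫ = 0 := by
  simp only [inner3, cross3_apply0, cross3_apply1, cross3_apply2]; ring
lemma inner_cross_self_s7 (g T : E3) (hg : ⟪g,g⟫ = 1) (hT : ⟪T,T⟫ = 1) (hgT : ⟪g,T⟫ = 0) :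
    ⟪cross3 g T, cross3 g T⟫ = 1 := by
  rw [inner3] at hg hT hgT
  simp only [inner3, cross3_apply0, cross3_apply1, cross3_apply2]
  linear_combination (T 0^2 + T 1^2 + T 2^2) * hg + hT
    - (g 0 * T 0 + g 1 * T 1 + g 2 * T 2) * hgT

lemma hasDerivAt_coord {f : ℝ → E3} {f' : E3} {x : ℝ} (hf : HasDerivAt f f' x) (i : Fin 3) :
    HasDerivAt (fun s => f s i) (f' i) x :=
  (EuclideanSpace.proj i : E3 →L[ℝ] ℝ).hasFDerivAt.comp_hasDerivAt x hf

lemma hasDerivAt_E3 {f : ℝ → E3} {f' : E3} {x : ℝ}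
    (h : ∀ i, HasDerivAt (fun s => f s i) (f' i) x) : HasDerivAt f f' x := by
  have e := EuclideanSpace.equiv (Fin 3) ℝ
  have : HasDerivAt (fun s => (EuclideanSpace.equiv (Fin 3) ℝ) (f s))
      ((EuclideanSpace.equiv (Fin 3) ℝ) f') x := hasDerivAt_pi.2 h
  have := ((EuclideanSpace.equiv (Fin 3) ℝ).symm.hasFDerivAt.comp_hasDerivAt x this)
  simpa [Function.comp_def] using this

lemma HasDerivAt.cross3' {f g : ℝ → E3} {f' g' : E3} {x : ℝ} (hf : HasDerivAt f f' x)
    (hg : HasDerivAt g g' x) :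
    HasDerivAt (fun s => cross3 (f s) (g s)) (cross3 f' (g x) + cross3 (f x) g') x := by
  apply hasDerivAt_E3
  intro i
  fin_cases i
  · show HasDerivAt (fun s => cross3 (f s) (g s) 0) ((cross3 f' (g x) + cross3 (f x) g') 0) x
    have h : HasDerivAt (fun s => f s 1 * g s 2 - f s 2 * g s 1)
        ((f' 1 * g x 2 + f x 1 * g' 2) - (f' 2 * g x 1 + f x 2 * g' 1)) x :=
      ((hasDerivAt_coord hf 1).mul (hasDerivAt_coord hg 2)).sub
        ((hasDerivAt_coord hf 2).mul (hasDerivAt_coord hg 1))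
    have he : ∀ s, f s 1 * g s 2 - f s 2 * g s 1 = cross3 (f s) (g s) 0 := fun s =>
      (cross3_apply0 _ _).symm
    simp only [he] at h
    convert h using 1
    simp only [PiLp.add_apply, cross3_apply0]
    ring
  · show HasDerivAt (fun s => cross3 (f s) (g s) 1) ((cross3 f' (g x) + cross3 (f x) g') 1) x
    have h : HasDerivAt (fun s => f s 2 * g s 0 - f s 0 * g s 2)
        ((f' 2 * g x 0 + f x 2 * g' 0) - (f' 0 * g x 2 + f x 0 * g' 2)) x :=
      ((hasDerivAt_coord hf 2).mul (hasDerivAt_coord hg 0)).sub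
        ((hasDerivAt_coord hf 0).mul (hasDerivAt_coord hg 2))
    have he : ∀ s, f s 2 * g s 0 - f s 0 * g s 2 = cross3 (f s) (g s) 1 := fun s =>
      (cross3_apply1 _ _).symm
    simp only [he] at h
    convert h using 1
    simp only [PiLp.add_apply, cross3_apply1]
    ring
  · show HasDerivAt (fun s => cross3 (f s) (g s) 2) ((cross3 f' (g x) + cross3 (f x) g') 2) x
    have h : HasDerivAt (fun s => f s 0 * g s 1 - f s 1 * g s 0)
        ((f' 0 * g x 1 + f x 0 * g' 1) - (f' 1 * g x 0 + f x 1 * g' 0)) x :=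
      ((hasDerivAt_coord hf 0).mul (hasDerivAt_coord hg 1)).sub
        ((hasDerivAt_coord hf 1).mul (hasDerivAt_coord hg 0))
    have he : ∀ s, f s 0 * g s 1 - f s 1 * g s 0 = cross3 (f s) (g s) 2 := fun s =>
      (cross3_apply2 _ _).symm
    simp only [he] at h
    convert h using 1
    simp only [PiLp.add_apply, cross3_apply2]
    ring

lemma main_lemma (θ : ℝ) (γ : ℝ → E3) (hγ2 : ContDiff ℝ 2 γ) (hsph : ∀ s, ‖γ s‖ = 1)
    (hreg : ∀ s, deriv γ s ≠ 0) (hang : ∀ s, radCurv γ s - θ ∈ Ioo 0 π) (t : ℝ) :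
    radCurv (fun t' => caustic γ t' θ) t = radCurv γ t - θ ∧
    geodCurv (fun t' => caustic γ t' θ) t = Real.cot (radCurv γ t - θ) := by
  -- basic differentiability
  have hdiff : Differentiable ℝ γ := hγ2.differentiable (by norm_num)
  have hC1 : ContDiff ℝ 1 (deriv γ) := by
    rw [show (2 : WithTop ℕ∞) = 1 + 1 from rfl] at hγ2
    exact (contDiff_succ_iff_deriv.mp hγ2).2.2
  have hdd : ∀ s, HasDerivAt (deriv γ) (deriv (deriv γ) s) s := fun s =>
    ((hC1.differentiable (by norm_num)) s).hasDerivAt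
  have hdγ : ∀ s, HasDerivAt γ (deriv γ s) s := fun s => (hdiff s).hasDerivAt
  set v : ℝ → ℝ := fun s => ‖deriv γ s‖ with hv_def
  have hv0 : ∀ s, v s ≠ 0 := fun s => norm_ne_zero_iff.2 (hreg s)
  have hvpos : ∀ s, 0 < v s := fun s => norm_pos_iff.2 (hreg s)
  set T : ℝ → E3 := unitTan γ with hT_def
  have hT_eq : ∀ s, T s = (v s)⁻¹ • deriv γ s := fun _ => rfl
  have hvdiff : ∀ s, DifferentiableAt ℝ v s := fun s =>
    DifferentiableAt.norm (𝕜 := ℝ) ((hdd s).differentiableAt) (hreg s)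
  have hTdiff : ∀ s, DifferentiableAt ℝ T s := fun s =>
    ((hvdiff s).inv (hv0 s)).smul (hdd s).differentiableAt
  have hTd : ∀ s, HasDerivAt T (deriv T s) s := fun s => (hTdiff s).hasDerivAt
  -- frame identities
  have hγγ : ∀ s, ⟪γ s, γ s⟫ = 1 := by
    intro s
    rw [real_inner_self_eq_norm_mul_norm, hsph s]; norm_num
  have hdγ0 : ∀ s, ⟪γ s, deriv γ s⟫ = 0 := by
    intro s
    have h1 : HasDerivAt (fun u => ⟪γ u, γ u⟫) (⟪γ s, deriv γ s⟫ + ⟪deriv γ s, γ s⟫) s :=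
      (hdγ s).inner ℝ (hdγ s)
    have h2 : HasDerivAt (fun u => ⟪γ u, γ u⟫) 0 s := by
      have he : (fun u => ⟪γ u, γ u⟫) = fun _ => (1:ℝ) := funext fun u => hγγ u
      rw [he]; exact hasDerivAt_const s 1
    have h3 := h1.unique h2
    have h4 : ⟪deriv γ s, γ s⟫ = ⟪γ s, deriv γ s⟫ := real_inner_comm _ _
    linarith
  have hγT : ∀ s, ⟪γ s, T s⟫ = 0 := by
    intro s
    rw [hT_eq, real_inner_smul_right, hdγ0 s, mul_zero]
  have hTT : ∀ s, ⟪T s, T s⟫ = 1 := by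
    intro s
    rw [hT_eq, real_inner_smul_right, real_inner_smul_left,
      real_inner_self_eq_norm_mul_norm]
    have h : ‖deriv γ s‖ = v s := rfl
    rw [h]
    field_simp [hv0 s]
  have hnT : ∀ s, ‖T s‖ = 1 := by
    intro s
    have := hTT s
    rw [real_inner_self_eq_norm_mul_norm] at this
    nlinarith [norm_nonneg (T s)]
  have hdγT : ∀ s, deriv γ s = v s • T s := by
    intro s
    rw [hT_eq, smul_inv_smul₀ (hv0 s)]
  have hTT' : ∀ s, ⟪deriv T s, T s⟫ = 0 := by
    intro s
    have h1 : HasDerivAt (fun u => ⟪T u, T u⟫) (⟪T s, deriv T s⟫ + ⟪deriv T s, T s⟫) s :=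
      (hTd s).inner ℝ (hTd s)
    have h2 : HasDerivAt (fun u => ⟪T u, T u⟫) 0 s := by
      have he : (fun u => ⟪T u, T u⟫) = fun _ => (1:ℝ) := funext fun u => hTT u
      rw [he]; exact hasDerivAt_const s 1
    have h3 := h1.unique h2
    have h4 : ⟪deriv T s, T s⟫ = ⟪T s, deriv T s⟫ := real_inner_comm _ _
    linarith
  have hγT' : ∀ s, ⟪γ s, deriv T s⟫ = -(v s) := by
    intro s
    have h1 : HasDerivAt (fun u => ⟪γ u, T u⟫) (⟪γ s, deriv T s⟫ + ⟪deriv γ s, T s⟫) s :=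
      (hdγ s).inner ℝ (hTd s)
    have h2 : HasDerivAt (fun u => ⟪γ u, T u⟫) 0 s := by
      have he : (fun u => ⟪γ u, T u⟫) = fun _ => (0:ℝ) := funext fun u => hγT u
      rw [he]; exact hasDerivAt_const s 0
    have h3 := h1.unique h2
    have h4 : ⟪deriv γ s, T s⟫ = v s := by
      rw [hdγT s, real_inner_smul_left, hTT s, mul_one]
    linarith
  set N : ℝ → E3 := unitNor γ with hN_def
  have hN_eq : ∀ s, N s = cross3 (γ s) (T s) := fun _ => rfl
  set κ : ℝ → ℝ := geodCurv γ with hκ_def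
  have hκ : ∀ s, ⟪deriv T s, N s⟫ = κ s * v s := by
    intro s
    have h : κ s = ⟪deriv T s, N s⟫ / v s := rfl
    rw [h, div_mul_cancel₀ _ (hv0 s)]
  -- derivative of N
  have hNd : ∀ s, HasDerivAt N (-(κ s * v s) • T s) s := by
    intro s
    have h := (hdγ s).cross3' (hTd s)
    have h1 : cross3 (deriv γ s) (T s) = 0 := by
      rw [hdγT s]; exact cross_smul_self _ _
    have h2 : cross3 (γ s) (deriv T s)
        = ⟪deriv T s, T s⟫ • cross3 (γ s) (T s) - ⟪deriv T s, cross3 (γ s) (T s)⟫ • T s :=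
      cross_eq (γ s) (T s) (deriv T s) (hTT s) (hγT s)
    rw [← hN_eq s] at h2
    rw [hTT' s, hκ s, zero_smul, zero_sub] at h2
    have : HasDerivAt (fun u => cross3 (γ u) (T u)) (-(κ s * v s) • T s) s := by
      rw [show (-(κ s * v s) • T s) = cross3 (deriv γ s) (T s) + cross3 (γ s) (deriv T s) by
        rw [h1, h2]; module]
      exact h
    exact this.congr_of_eventuallyEq (Eventually.of_forall fun u => (hN_eq u).symm)
  -- the translated curve
  set γθ : ℝ → E3 := fun t' => caustic γ t' θ with hγθ_def
  have hγθd : ∀ s, HasDerivAt γθ ((v s * (cos θ - κ s * sin θ)) • T s) s := by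
    intro s
    have h := ((hdγ s).const_smul (Real.cos θ)).add ((hNd s).const_smul (Real.sin θ))
    have he : (Real.cos θ • γ + Real.sin θ • N) = γθ := rfl
    rw [he] at h
    refine h.congr_deriv ?_
    rw [hdγT s]
    module
  -- positivity of the tangential factor
  have hpsi : ∀ s, arctan (κ s) + θ ∈ Ioo (-(π/2)) (π/2) := by
    intro s
    have h1 := (hang s).1
    have h2 := (hang s).2
    have hρ : radCurv γ s = π/2 - arctan (κ s) := rfl
    rw [hρ] at h1 h2
    exact ⟨by linarith, by linarith⟩
  have hsc : ∀ s, sin (arctan (κ s)) = κ s * cos (arctan (κ s)) := by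
    intro s
    have h := tan_arctan (κ s)
    rw [tan_eq_sin_div_cos] at h
    field_simp [(cos_arctan_pos (κ s)).ne'] at h
    linarith
  have hcos_eq : ∀ s, cos (arctan (κ s) + θ)
      = (cos θ - κ s * sin θ) * cos (arctan (κ s)) := by
    intro s
    rw [cos_add, hsc s]
    ring
  have hpos : ∀ s, 0 < cos θ - κ s * sin θ := by
    intro s
    have hcψ : 0 < cos (arctan (κ s) + θ) := cos_pos_of_mem_Ioo (hpsi s)
    have hcφ : 0 < cos (arctan (κ s)) := cos_arctan_pos (κ s)
    rw [hcos_eq s] at hcψ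
    nlinarith
  have hc0pos : ∀ s, 0 < v s * (cos θ - κ s * sin θ) := fun s =>
    mul_pos (hvpos s) (hpos s)
  -- the unit tangent of the translated curve
  have hTθ : ∀ s, unitTan γθ s = T s := by
    intro s
    have hd : deriv γθ s = (v s * (cos θ - κ s * sin θ)) • T s := (hγθd s).deriv
    show ‖deriv γθ s‖⁻¹ • deriv γθ s = T s
    rw [hd, norm_smul, hnT s, mul_one, Real.norm_eq_abs, abs_of_pos (hc0pos s),
      smul_smul, inv_mul_cancel₀ (hc0pos s).ne', one_smul]
  have hTfun : unitTan γθ = T := funext hTθ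
  -- the unit normal of the translated curve
  have hNorθ : unitNor γθ t = cos θ • N t - sin θ • γ t := by
    show cross3 (γθ t) (unitTan γθ t) = _
    rw [hTfun]
    show cross3 (Real.cos θ • γ t + Real.sin θ • cross3 (γ t) (T t)) (T t) = _
    rw [cross_combo (γ t) (T t) (hTT t) (hγT t) (cos θ) (sin θ), hN_eq t]
  -- geodesic curvature of the translated curve
  have hgeod : geodCurv γθ t = (κ t * cos θ + sin θ) / (cos θ - κ t * sin θ) := by
    show ⟪deriv (unitTan γθ) t, unitNor γθ t⟫ / ‖deriv γθ t‖ = _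
    rw [hTfun, hNorθ, (hγθd t).deriv, norm_smul, hnT t, mul_one, Real.norm_eq_abs,
      abs_of_pos (hc0pos t), inner_sub_right, real_inner_smul_right, real_inner_smul_right,
      hκ t]
    have h1 : ⟪deriv T t, γ t⟫ = -(v t) := by rw [real_inner_comm]; exact hγT' t
    rw [h1]
    rw [div_eq_div_iff (hc0pos t).ne' (hpos t).ne']
    ring
  -- the trigonometric identities
  set φ := arctan (κ t) with hφ_def
  have hψ := hpsi t
  have hcφ : 0 < cos φ := cos_arctan_pos (κ t)
  have hcψ : 0 < cos (φ + θ) := cos_pos_of_mem_Ioo hψ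
  have htan : (κ t * cos θ + sin θ) / (cos θ - κ t * sin θ) = tan (φ + θ) := by
    have hsψ : sin (φ + θ) = (κ t * cos θ + sin θ) * cos φ := by
      rw [sin_add, hsc t]; ring
    rw [tan_eq_sin_div_cos, hsψ, hcos_eq t, mul_div_mul_right _ _ hcφ.ne']
  have hρt : radCurv γ t = π/2 - φ := rfl
  have hret : radCurv γθ t = radCurv γ t - θ := by
    show π/2 - arctan (geodCurv γθ t) = radCurv γ t - θ
    rw [hgeod, htan, arctan_tan hψ.1 hψ.2, hρt]
    ring
  have hcot : Real.cot (radCurv γ t - θ) = tan (φ + θ) := by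
    rw [hρt, show π/2 - φ - θ = π/2 - (φ + θ) by ring, Real.cot_eq_cos_div_sin,
      Real.cos_pi_div_two_sub, Real.sin_pi_div_two_sub, tan_eq_sin_div_cos]
  exact ⟨hret, by rw [hgeod, htan, hcot]⟩


/-- The radius of curvature of the translated curve
`γ_θ = cos θ · γ + sin θ · n` equals `ρ(t) − θ`; equivalently, its geodesic curvature equals
`cot (ρ(t) − θ)`. -/
theorem translation_radius_of_curvature (ρ₂ ρ₁ θ : ℝ) (hρ₂ : 0 ≤ ρ₂) (hρ : ρ₂ < ρ₁)
    (hρ₁ : ρ₁ ≤ π) (γ : ℝ → E3) (hγ : IsClosedCurve γ)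
    (hrad : ∀ t, radCurv γ t ∈ Ioo ρ₂ ρ₁) (hθ : θ ∈ Icc (ρ₁ - π) ρ₂) :
    ∀ t, radCurv (fun t' => caustic γ t' θ) t = radCurv γ t - θ ∧
      geodCurv (fun t' => caustic γ t' θ) t = Real.cot (radCurv γ t - θ) := by
  intro t
  have hang : ∀ s, radCurv γ s - θ ∈ Ioo 0 π := by
    intro s
    have h := hrad s
    exact ⟨by linarith [h.1, hθ.2], by linarith [h.2, hθ.1]⟩
  exact main_lemma θ γ hγ.1 (fun s => (hγ.2.2 s).1) (fun s => (hγ.2.2 s).2) hang t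
end
end

section
/- Let ρ₀ ∈ (0, π) and let γ be a closed curve on S² with radius of curvature ρ(t) ∈ (0, ρ₀) for all t. Define B : [0,1] × [ρ₀ − π, 0] → S² by B(t,θ) = cos θ · γ(t) + sin θ · n(t). Then: (a) ∂B/∂θ(t,θ) = −sin θ · γ(t) + cos θ · n(t) has norm 1; (b) ∂B/∂t(t,θ) = (|γ'(t)| sin(ρ(t) − θ)/sin ρ(t)) · t(t), which is nonzero and orthogonal to ∂B/∂θ(t,θ), and det(B(t,θ), ∂B/∂t(t,θ), ∂B/∂θ(t,θ)) > 0; in particular the derivative of B is an isomorphism at every point. (c) The map C : [0,1] × [0,ρ₀] → S² given by the same formula fails to be an immersion exactly at the points (t, ρ(t)). -/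
noncomputable section

open Real Set Filter
open scoped RealInnerProductSpace

namespace Band

lemma e3_inner (u v : E3) : ⟪u, v⟫ = u 0 * v 0 + u 1 * v 1 + u 2 * v 2 := by
  simp [PiLp.inner_apply, RCLike.inner_apply, Fin.sum_univ_three]; ring

lemma cross3_apply (u v : E3) (i : Fin 3) :
    cross3 u v i = ![u 1 * v 2 - u 2 * v 1, u 2 * v 0 - u 0 * v 2, u 0 * v 1 - u 1 * v 0] i := by
  simp [cross3]

lemma cross3_self (u : E3) : cross3 u u = 0 := by
  ext i; fin_cases i <;> simp [cross3_apply] <;> ring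

lemma inner_cross3_left (u v : E3) : ⟪u, cross3 u v⟫ = 0 := by
  simp [e3_inner, cross3_apply, Fin.sum_univ_three]; ring

lemma inner_cross3_right (u v : E3) : ⟪v, cross3 u v⟫ = 0 := by
  simp [e3_inner, cross3_apply, Fin.sum_univ_three]; ring

lemma inner_cross3_cross3 (u v : E3) :
    ⟪cross3 u v, cross3 u v⟫ = ⟪u,u⟫ * ⟪v,v⟫ - ⟪u,v⟫ ^ 2 := by
  simp only [e3_inner]
  simp [e3_inner, cross3_apply, Fin.sum_univ_three]; ring

lemma cross3_cross3 (w u v : E3) :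
    cross3 w (cross3 u v) = ⟪w,v⟫ • u - ⟪w,u⟫ • v := by
  ext i; fin_cases i <;>
    simp [cross3_apply, e3_inner, Fin.sum_univ_three, PiLp.smul_apply, PiLp.sub_apply,
      smul_eq_mul] <;> ring

lemma cross3_anticomm (u v : E3) : cross3 u v = -cross3 v u := by
  ext i; fin_cases i <;> simp [cross3_apply] <;> ring

lemma cross3_smul_left (a : ℝ) (u v : E3) : cross3 (a • u) v = a • cross3 u v := by
  ext i; fin_cases i <;> simp [cross3_apply, PiLp.smul_apply, smul_eq_mul] <;> ring

lemma cross3_smul_right (a : ℝ) (u v : E3) : cross3 u (a • v) = a • cross3 u v := by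
  ext i; fin_cases i <;> simp [cross3_apply, PiLp.smul_apply, smul_eq_mul] <;> ring

lemma cross3_add_left (u w v : E3) : cross3 (u + w) v = cross3 u v + cross3 w v := by
  ext i; fin_cases i <;> simp [cross3_apply, PiLp.add_apply] <;> ring

lemma cross3_add_right (u v w : E3) : cross3 u (v + w) = cross3 u v + cross3 u w := by
  ext i; fin_cases i <;> simp [cross3_apply, PiLp.add_apply] <;> ring

lemma det_eq_inner_cross3 (a b c : E3) :
    Matrix.det (Matrix.of fun i j => ![a, b, c] j i) = ⟪cross3 a b, c⟫ := by
  rw [Matrix.det_fin_three]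
  simp [e3_inner, cross3_apply, Fin.sum_univ_three, Matrix.of_apply]
  ring

lemma hasDerivAt_coord {f : ℝ → E3} {f' : E3} {t : ℝ} (hf : HasDerivAt f f' t) (i : Fin 3) :
    HasDerivAt (fun s => f s i) (f' i) t := by
  have := (EuclideanSpace.proj (𝕜 := ℝ) i).hasFDerivAt.comp_hasDerivAt t hf
  exact this

lemma hasDerivAt_cross3 {f g : ℝ → E3} {f' g' : E3} {t : ℝ}
    (hf : HasDerivAt f f' t) (hg : HasDerivAt g g' t) :
    HasDerivAt (fun s => cross3 (f s) (g s)) (cross3 f' (g t) + cross3 (f t) g') t := by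
  have h0 := hasDerivAt_coord hf 0
  have h1 := hasDerivAt_coord hf 1
  have h2 := hasDerivAt_coord hf 2
  have k0 := hasDerivAt_coord hg 0
  have k1 := hasDerivAt_coord hg 1
  have k2 := hasDerivAt_coord hg 2
  set p : ℝ → Fin 3 → ℝ := fun s =>
    ![f s 1 * g s 2 - f s 2 * g s 1, f s 2 * g s 0 - f s 0 * g s 2,
      f s 0 * g s 1 - f s 1 * g s 0] with hp
  set p' : Fin 3 → ℝ :=
    ![f' 1 * g t 2 + f t 1 * g' 2 - (f' 2 * g t 1 + f t 2 * g' 1),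
      f' 2 * g t 0 + f t 2 * g' 0 - (f' 0 * g t 2 + f t 0 * g' 2),
      f' 0 * g t 1 + f t 0 * g' 1 - (f' 1 * g t 0 + f t 1 * g' 0)] with hp'
  have hpi : HasDerivAt p p' t := by
    rw [hasDerivAt_pi]
    intro i
    fin_cases i
    · convert (h1.mul k2).sub (h2.mul k1) using 1 <;> simp [hp, hp', Pi.mul_def, Pi.sub_def]
    · convert (h2.mul k0).sub (h0.mul k2) using 1 <;> simp [hp, hp', Pi.mul_def, Pi.sub_def]
    · convert (h0.mul k1).sub (h1.mul k0) using 1 <;> simp [hp, hp', Pi.mul_def, Pi.sub_def]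
  have hL := (((EuclideanSpace.equiv (Fin 3) ℝ).symm :
      (Fin 3 → ℝ) ≃L[ℝ] E3) : (Fin 3 → ℝ) →L[ℝ] E3).hasFDerivAt.comp_hasDerivAt t hpi
  have e1 : (fun s => ((EuclideanSpace.equiv (Fin 3) ℝ).symm : (Fin 3 → ℝ) →L[ℝ] E3) (p s))
      = fun s => cross3 (f s) (g s) := by
    funext s; ext i
    fin_cases i <;> simp [hp, cross3_apply]
  have e2 : ((EuclideanSpace.equiv (Fin 3) ℝ).symm : (Fin 3 → ℝ) →L[ℝ] E3) p'
      = cross3 f' (g t) + cross3 (f t) g' := by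
    ext i
    fin_cases i <;> simp [hp', cross3_apply, PiLp.add_apply] <;> ring
  rw [Function.comp_def, e2, e1] at hL
  exact hL

variable {γ : ℝ → E3}

lemma smooth_deriv (hsm : ContDiff ℝ 2 γ) : Differentiable ℝ (deriv γ) := by
  have h2 : ContDiff ℝ (1 + 1 : WithTop ℕ∞) γ := by
    rw [one_add_one_eq_two]; exact hsm
  exact ((contDiff_succ_iff_deriv.mp h2).2.2).differentiable one_ne_zero

lemma gamma_diff (hsm : ContDiff ℝ 2 γ) : Differentiable ℝ γ :=
  hsm.differentiable (by norm_num)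

lemma inner_gamma_deriv (hsm : ContDiff ℝ 2 γ) (hunit : ∀ s, ‖γ s‖ = 1) (s : ℝ) :
    ⟪γ s, deriv γ s⟫ = 0 := by
  have hd := (gamma_diff hsm s).hasDerivAt
  have h := (hd.inner ℝ hd)
  have hconst : (fun u => ⟪γ u, γ u⟫) = fun _ => (1 : ℝ) := by
    funext u
    rw [real_inner_self_eq_norm_sq, hunit u]; norm_num
  rw [hconst] at h
  have h0 := h.unique (hasDerivAt_const s 1)
  have := real_inner_comm (γ s) (deriv γ s)
  linarith [h0, this]

lemma norm_unitTan (hreg : ∀ s, deriv γ s ≠ 0) (s : ℝ) : ‖unitTan γ s‖ = 1 := by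
  rw [unitTan, norm_smul, norm_inv, norm_norm,
    inv_mul_cancel₀ (norm_ne_zero_iff.mpr (hreg s))]

lemma inner_gamma_unitTan (hsm : ContDiff ℝ 2 γ) (hunit : ∀ s, ‖γ s‖ = 1) (s : ℝ) :
    ⟪γ s, unitTan γ s⟫ = 0 := by
  rw [unitTan, real_inner_smul_right, inner_gamma_deriv hsm hunit s, mul_zero]

lemma deriv_eq_smul_unitTan (hreg : ∀ s, deriv γ s ≠ 0) (s : ℝ) :
    deriv γ s = ‖deriv γ s‖ • unitTan γ s := by
  rw [unitTan, smul_smul, mul_inv_cancel₀ (norm_ne_zero_iff.mpr (hreg s)), one_smul]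

/-- Derivative of the unit normal along the curve. -/
lemma unitNor_hasDerivAt (hsm : ContDiff ℝ 2 γ) (hunit : ∀ s, ‖γ s‖ = 1)
    (hreg : ∀ s, deriv γ s ≠ 0) (t : ℝ) :
    HasDerivAt (unitNor γ) (-(‖deriv γ t‖ * geodCurv γ t) • unitTan γ t) t := by
  set v : ℝ := ‖deriv γ t‖ with hv
  have hvpos : 0 < v := norm_pos_iff.mpr (hreg t)
  have hvne : v ≠ 0 := ne_of_gt hvpos
  have hdγ : Differentiable ℝ (deriv γ) := smooth_deriv hsm
  have hγd : Differentiable ℝ γ := gamma_diff hsm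
  have hvdiff : DifferentiableAt ℝ (fun s => ‖deriv γ s‖) t :=
    (hdγ t).norm ℝ (hreg t)
  have hT : DifferentiableAt ℝ (unitTan γ) t := by
    show DifferentiableAt ℝ (fun s => ‖deriv γ s‖⁻¹ • deriv γ s) t
    exact (hvdiff.inv (norm_ne_zero_iff.mpr (hreg t))).smul (hdγ t)
  set T' : E3 := deriv (unitTan γ) t with hT'def
  have hT' : HasDerivAt (unitTan γ) T' t := hT.hasDerivAt
  set n := unitNor γ t with hndef
  set T := unitTan γ t with hTdef
  set κ : ℝ := geodCurv γ t with hκdef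
  have hTT : ⟪T, T⟫ = 1 := by
    rw [real_inner_self_eq_norm_sq, hTdef, norm_unitTan hreg t]; norm_num
  have hγγ : ⟪γ t, γ t⟫ = 1 := by
    rw [real_inner_self_eq_norm_sq, hunit t]; norm_num
  have hγT : ⟪γ t, T⟫ = 0 := inner_gamma_unitTan hsm hunit t
  have hγn : ⟪γ t, n⟫ = 0 := inner_cross3_left _ _
  have hTn : ⟪T, n⟫ = 0 := inner_cross3_right _ _
  have hnn : ⟪n, n⟫ = 1 := by
    rw [hndef, unitNor, inner_cross3_cross3, hγγ]
    rw [← hTdef, hTT, hγT]; ring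
  have hTT' : ⟪T', T⟫ = 0 := by
    have h := hT'.inner ℝ hT'
    have hconst : (fun u => ⟪unitTan γ u, unitTan γ u⟫) = fun _ => (1 : ℝ) := by
      funext u
      rw [real_inner_self_eq_norm_sq, norm_unitTan hreg u]; norm_num
    rw [hconst] at h
    have h0 := h.unique (hasDerivAt_const t 1)
    have := real_inner_comm T T'
    linarith [h0, this]
  have hγT' : ⟪γ t, T'⟫ = -v := by
    have h := (hγd t).hasDerivAt.inner ℝ hT'
    have hconst : (fun u => ⟪γ u, unitTan γ u⟫) = fun _ => (0 : ℝ) := by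
      funext u; exact inner_gamma_unitTan hsm hunit u
    rw [hconst] at h
    have h0 := h.unique (hasDerivAt_const t 0)
    have hdT : ⟪deriv γ t, T⟫ = v := by
      rw [deriv_eq_smul_unitTan hreg t, real_inner_smul_left, ← hTdef, hTT, mul_one, hv]
    linarith [h0, hdT]
  have hκv : ⟪T', n⟫ = v * κ := by
    rw [hκdef, geodCurv, ← hT'def, ← hndef, ← hv]
    field_simp
  have hT'val : T' = (-v) • γ t + (v * κ) • n := by
    set w : E3 := T' - ((-v) • γ t + (v * κ) • n) with hwdef
    have hwT : ⟪w, T⟫ = 0 := by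
      rw [hwdef, inner_sub_left, inner_add_left, real_inner_smul_left, real_inner_smul_left]
      have h2 : ⟪n, T⟫ = 0 := by rw [real_inner_comm]; exact hTn
      rw [hγT, h2, hTT']; ring
    have hwγ : ⟪w, γ t⟫ = 0 := by
      rw [hwdef, inner_sub_left, inner_add_left, real_inner_smul_left, real_inner_smul_left]
      have h1 : ⟪T', γ t⟫ = -v := by rw [real_inner_comm]; exact hγT'
      have h2 : ⟪n, γ t⟫ = 0 := by rw [real_inner_comm]; exact hγn
      rw [h1, h2, hγγ]; ring
    have hwn : ⟪w, n⟫ = 0 := by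
      rw [hwdef, inner_sub_left, inner_add_left, real_inner_smul_left, real_inner_smul_left]
      rw [hκv, hγn, hnn]; ring
    have hwcross : cross3 w n = 0 := by
      rw [hndef, unitNor, cross3_cross3, ← hTdef, hwT, hwγ]
      simp
    have hw0 : ⟪w, w⟫ = 0 := by
      have := inner_cross3_cross3 w n
      rw [hwcross, hnn, hwn, inner_zero_left] at this
      linarith [this]
    have : w = 0 := inner_self_eq_zero.mp hw0
    rw [hwdef] at this
    exact sub_eq_zero.mp this
  have hnder : HasDerivAt (unitNor γ)
      (cross3 (deriv γ t) T + cross3 (γ t) T') t := by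
    have := hasDerivAt_cross3 (f := γ) (g := unitTan γ) (hγd t).hasDerivAt hT'
    exact this
  have hval : cross3 (deriv γ t) T + cross3 (γ t) T' = -(v * κ) • T := by
    rw [deriv_eq_smul_unitTan hreg t, ← hTdef, ← hv, cross3_smul_left, cross3_self,
      hT'val, cross3_add_right, cross3_smul_right, cross3_smul_right, cross3_self]
    have hγn' : cross3 (γ t) n = -T := by
      rw [hndef, unitNor, cross3_cross3, ← hTdef, hγT, hγγ]
      module
    rw [hγn']
    module
  rw [hval] at hnder
  exact hnder

lemma caustic_deriv_theta (γ : ℝ → E3) (t θ : ℝ) :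
    HasDerivAt (fun θ' => caustic γ t θ')
      ((-Real.sin θ) • γ t + Real.cos θ • unitNor γ t) θ := by
  simp only [caustic]
  exact ((Real.hasDerivAt_cos θ).smul_const (γ t)).add
    ((Real.hasDerivAt_sin θ).smul_const (unitNor γ t))

lemma sin_radCurv_pos (γ : ℝ → E3) (t : ℝ) : 0 < Real.sin (radCurv γ t) := by
  rw [radCurv, Real.sin_pi_div_two_sub, Real.cos_arctan]
  positivity

lemma coeff_eq (γ : ℝ → E3) (t θ : ℝ) :
    ‖deriv γ t‖ * Real.sin (radCurv γ t - θ) / Real.sin (radCurv γ t)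
      = ‖deriv γ t‖ * (Real.cos θ - geodCurv γ t * Real.sin θ) := by
  set κ := geodCurv γ t with hκ
  rw [radCurv, ← hκ, Real.sin_sub, Real.sin_pi_div_two_sub, Real.cos_pi_div_two_sub,
    Real.cos_arctan, Real.sin_arctan]
  have h : (0:ℝ) < Real.sqrt (1 + κ ^ 2) := by positivity
  field_simp

lemma caustic_deriv_t (hsm : ContDiff ℝ 2 γ) (hunit : ∀ s, ‖γ s‖ = 1)
    (hreg : ∀ s, deriv γ s ≠ 0) (t θ : ℝ) :
    HasDerivAt (fun t' => caustic γ t' θ)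
      ((‖deriv γ t‖ * Real.sin (radCurv γ t - θ) / Real.sin (radCurv γ t))
        • unitTan γ t) t := by
  have h1 := ((gamma_diff hsm t).hasDerivAt).const_smul (Real.cos θ)
  have h2 := (unitNor_hasDerivAt hsm hunit hreg t).const_smul (Real.sin θ)
  have h := h1.add h2
  have hfun : (fun t' => Real.cos θ • γ t' + Real.sin θ • unitNor γ t')
      = fun t' => caustic γ t' θ := by
    funext t'; rw [caustic]
  rw [← hfun]
  have hval : Real.cos θ • deriv γ t
        + Real.sin θ • (-(‖deriv γ t‖ * geodCurv γ t) • unitTan γ t)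
      = (‖deriv γ t‖ * Real.sin (radCurv γ t - θ) / Real.sin (radCurv γ t))
        • unitTan γ t := by
    rw [coeff_eq γ t θ]
    set v := ‖deriv γ t‖ with hv
    have hd : deriv γ t = v • unitTan γ t := deriv_eq_smul_unitTan hreg t
    rw [hd]
    module
  rw [hval] at h
  exact h

lemma norm_comb (a b : ℝ) (hab : a ^ 2 + b ^ 2 = 1) (u w : E3)
    (hu : ⟪u,u⟫ = 1) (hw : ⟪w,w⟫ = 1) (huw : ⟪u,w⟫ = 0) :
    ‖a • u + b • w‖ = 1 := by
  have hwu : ⟪w,u⟫ = 0 := by rw [real_inner_comm]; exact huw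
  have h2 : ‖a • u + b • w‖ ^ 2 = 1 := by
    rw [← real_inner_self_eq_norm_sq]
    rw [inner_add_left, inner_add_right, inner_add_right, real_inner_smul_left,
      real_inner_smul_left, real_inner_smul_left, real_inner_smul_left,
      real_inner_smul_right, real_inner_smul_right, real_inner_smul_right,
      real_inner_smul_right, hu, hw, huw, hwu]
    nlinarith [hab]
  have hnn := norm_nonneg (a • u + b • w)
  nlinarith [h2, hnn]

end Band

/-- Properties of the regular band `B(t,θ) = cos θ · γ(t) + sin θ · n(t)`
for `θ ∈ [ρ₀ − π, 0]`, and the locus where the caustic band (the same formula with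
`θ ∈ [0, ρ₀]`) fails to be an immersion. -/
theorem band_properties (ρ₀ : ℝ) (hρ₀ : ρ₀ ∈ Ioo 0 π) (γ : ℝ → E3)
    (hγ : IsClosedCurve γ) (hrad : ∀ t, radCurv γ t ∈ Ioo 0 ρ₀) :
    (∀ t, ∀ θ ∈ Icc (ρ₀ - π) 0,
      -- (a)
      deriv (fun θ' => caustic γ t θ') θ
          = (-Real.sin θ) • γ t + Real.cos θ • unitNor γ t ∧
      ‖deriv (fun θ' => caustic γ t θ') θ‖ = 1 ∧
      -- (b)
      deriv (fun t' => caustic γ t' θ) t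
          = (‖deriv γ t‖ * Real.sin (radCurv γ t - θ) / Real.sin (radCurv γ t))
              • unitTan γ t ∧
      deriv (fun t' => caustic γ t' θ) t ≠ 0 ∧
      ⟪deriv (fun t' => caustic γ t' θ) t, deriv (fun θ' => caustic γ t θ') θ⟫ = 0 ∧
      0 < Matrix.det (Matrix.of fun i j =>
          ![caustic γ t θ, deriv (fun t' => caustic γ t' θ) t,
            deriv (fun θ' => caustic γ t θ') θ] j i)) ∧
    -- (c)
    (∀ t, ∀ θ ∈ Icc (0:ℝ) ρ₀,
      (¬ LinearIndependent ℝ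
          ![deriv (fun t' => caustic γ t' θ) t, deriv (fun θ' => caustic γ t θ') θ])
        ↔ θ = radCurv γ t) := by
  obtain ⟨hsm, hper, hcond⟩ := hγ
  have hunit : ∀ s, ‖γ s‖ = 1 := fun s => (hcond s).1
  have hreg : ∀ s, deriv γ s ≠ 0 := fun s => (hcond s).2
  have hvpos : ∀ t, 0 < ‖deriv γ t‖ := fun t => norm_pos_iff.mpr (hreg t)
  have hγγ : ∀ t, ⟪γ t, γ t⟫ = 1 := fun t => by
    rw [real_inner_self_eq_norm_sq, hunit t]; norm_num
  have hTT : ∀ t, ⟪unitTan γ t, unitTan γ t⟫ = 1 := fun t => by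
    rw [real_inner_self_eq_norm_sq, Band.norm_unitTan hreg t]; norm_num
  have hγT : ∀ t, ⟪γ t, unitTan γ t⟫ = 0 := Band.inner_gamma_unitTan hsm hunit
  have hγn : ∀ t, ⟪γ t, unitNor γ t⟫ = 0 := fun t => Band.inner_cross3_left _ _
  have hTn : ∀ t, ⟪unitTan γ t, unitNor γ t⟫ = 0 := fun t => Band.inner_cross3_right _ _
  have hnn : ∀ t, ⟪unitNor γ t, unitNor γ t⟫ = 1 := fun t => by
    rw [unitNor, Band.inner_cross3_cross3, hγγ t]
    have h1 := hTT t
    have h2 := hγT t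
    rw [unitTan] at h1 h2 ⊢
    rw [h1, h2]; ring
  have hTne : ∀ t, unitTan γ t ≠ 0 := fun t => by
    intro h
    have := Band.norm_unitTan hreg t
    rw [h, norm_zero] at this; norm_num at this
  have hDθ : ∀ t θ, deriv (fun θ' => caustic γ t θ') θ
      = (-Real.sin θ) • γ t + Real.cos θ • unitNor γ t :=
    fun t θ => (Band.caustic_deriv_theta γ t θ).deriv
  have hDt : ∀ t θ, deriv (fun t' => caustic γ t' θ) t
      = (‖deriv γ t‖ * Real.sin (radCurv γ t - θ) / Real.sin (radCurv γ t))
        • unitTan γ t :=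
    fun t θ => (Band.caustic_deriv_t hsm hunit hreg t θ).deriv
  have hDθnorm : ∀ t θ, ‖deriv (fun θ' => caustic γ t θ') θ‖ = 1 := fun t θ => by
    rw [hDθ t θ]
    exact Band.norm_comb _ _ (by nlinarith [Real.sin_sq_add_cos_sq θ]) _ _
      (hγγ t) (hnn t) (hγn t)
  have hTγ : ∀ t, ⟪unitTan γ t, γ t⟫ = 0 := fun t => by
    rw [real_inner_comm]; exact hγT t
  have hinner0 : ∀ t θ,
      ⟪deriv (fun t' => caustic γ t' θ) t, deriv (fun θ' => caustic γ t θ') θ⟫ = 0 :=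
    fun t θ => by
      rw [hDθ t θ, hDt t θ, real_inner_smul_left, inner_add_right, real_inner_smul_right,
        real_inner_smul_right, hTγ t, hTn t]
      ring
  constructor
  · intro t θ hθ
    have hρ := hrad t
    have hsρ : 0 < Real.sin (radCurv γ t) := Band.sin_radCurv_pos γ t
    have hsin : 0 < Real.sin (radCurv γ t - θ) := by
      apply Real.sin_pos_of_pos_of_lt_pi
      · linarith [hρ.1, hθ.2]
      · linarith [hρ.2, hθ.1]
    have hcoef : 0 < ‖deriv γ t‖ * Real.sin (radCurv γ t - θ) / Real.sin (radCurv γ t) :=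
      div_pos (mul_pos (hvpos t) hsin) hsρ
    refine ⟨hDθ t θ, hDθnorm t θ, hDt t θ, ?_, hinner0 t θ, ?_⟩
    · rw [hDt t θ]
      exact smul_ne_zero (ne_of_gt hcoef) (hTne t)
    · rw [Band.det_eq_inner_cross3, hDθ t θ, hDt t θ, Band.cross3_smul_right]
      have hcT : cross3 (caustic γ t θ) (unitTan γ t)
          = Real.cos θ • unitNor γ t - Real.sin θ • γ t := by
        rw [caustic, Band.cross3_add_left, Band.cross3_smul_left, Band.cross3_smul_left]
        have h1 : cross3 (γ t) (unitTan γ t) = unitNor γ t := rfl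
        have h2 : cross3 (unitNor γ t) (unitTan γ t) = -(γ t) := by
          rw [Band.cross3_anticomm, unitNor, Band.cross3_cross3, hTγ t]
          have h3 := hTT t
          rw [unitTan] at h3 ⊢
          rw [h3]
          module
        rw [h1, h2]
        module
      have h3 : ⟪unitNor γ t, γ t⟫ = 0 := by rw [real_inner_comm]; exact hγn t
      rw [hcT]
      simp only [inner_sub_left, inner_add_right, real_inner_smul_left, real_inner_smul_right]
      rw [h3, hnn t, hγγ t, hγn t]
      nlinarith [hcoef, Real.sin_sq_add_cos_sq θ]
  · intro t θ hθ
    have hρ := hrad t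
    have hsρ : 0 < Real.sin (radCurv γ t) := Band.sin_radCurv_pos γ t
    constructor
    · intro hLI
      by_contra hne
      apply hLI
      have hsin : Real.sin (radCurv γ t - θ) ≠ 0 := by
        rcases lt_trichotomy θ (radCurv γ t) with h | h | h
        · exact ne_of_gt (Real.sin_pos_of_pos_of_lt_pi (by linarith)
            (by linarith [hρ.2, hθ.1, hρ₀.2]))
        · exact absurd h hne
        · have hpos : 0 < Real.sin (θ - radCurv γ t) :=
            Real.sin_pos_of_pos_of_lt_pi (by linarith)
              (by linarith [hθ.2, hρ.1, hρ₀.2])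
          rw [show radCurv γ t - θ = -(θ - radCurv γ t) by ring, Real.sin_neg]
          exact neg_ne_zero.mpr (ne_of_gt hpos)
      have hcne : ‖deriv γ t‖ * Real.sin (radCurv γ t - θ) / Real.sin (radCurv γ t) ≠ 0 :=
        div_ne_zero (mul_ne_zero (ne_of_gt (hvpos t)) hsin) (ne_of_gt hsρ)
      rw [linearIndependent_fin2]
      simp only [Matrix.cons_val_one, Matrix.head_cons, Matrix.cons_val_zero]
      constructor
      · intro h0
        have := hDθnorm t θ
        rw [h0, norm_zero] at this; norm_num at this
      · intro a ha
        have h1 : ⟪a • deriv (fun θ' => caustic γ t θ') θ, unitTan γ t⟫ = 0 := by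
          rw [real_inner_smul_left, hDθ t θ, inner_add_left, real_inner_smul_left,
            real_inner_smul_left, hγT t]
          have h2 : ⟪unitNor γ t, unitTan γ t⟫ = 0 := by
            rw [real_inner_comm]; exact hTn t
          rw [h2]; ring
        rw [ha, hDt t θ, real_inner_smul_left, hTT t, mul_one] at h1
        exact hcne h1
    · intro h hLI
      have h0 : deriv (fun t' => caustic γ t' θ) t = 0 := by
        rw [hDt t θ, h, sub_self, Real.sin_zero, mul_zero, zero_div, zero_smul]
      have := hLI.ne_zero 0
      rw [Matrix.cons_val_zero] at this
      exact this h0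
end
end

section
/- Identify ℝ³ with the purely imaginary quaternions inside ℍ ≅ ℝ⁴. Let z : ℝ → ℍ be a differentiable curve with |z(t)| = 1 for all t, and for each t let Φ(t) ∈ SO(3) be the rotation of the imaginary quaternions given by v ↦ z(t) · v · z(t)⁻¹ (which equals z(t) · v · conj(z(t)) since |z(t)| = 1). Then for every t, the Frobenius norm of the matrix Φ'(t) (the square root of the sum of the squares of its nine entries) equals 2√2 · |z'(t)|. In other words, the covering map π : S³ → SO(3), π(z)v = z v z̄, satisfies π*⟨·,·⟩ = 8⟨·,·⟩, where SO(3) carries the metric inherited from ℝ⁹ and S³ the round metric inherited from ℝ⁴. -/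
noncomputable section

open Real

/-- The imaginary coordinates of a quaternion, identifying the purely imaginary
quaternions with `ℝ³`. -/
def imCoords (q : Quaternion ℝ) : Fin 3 → ℝ := ![q.imI, q.imJ, q.imK]

/-- The imaginary basis quaternions `i, j, k`. -/
def quatBasis : Fin 3 → Quaternion ℝ := ![⟨0, 1, 0, 0⟩, ⟨0, 0, 1, 0⟩, ⟨0, 0, 0, 1⟩]

/-- The rotation of the imaginary quaternions `v ↦ z v z̄` induced by a unit quaternion `z`,
written as a `3 × 3` real matrix. -/
def quatRot (z : Quaternion ℝ) : Matrix (Fin 3) (Fin 3) ℝ :=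
  Matrix.of fun i j => imCoords (z * quatBasis j * star z) i

private instance : StarModule ℝ (Quaternion ℝ) := ⟨Quaternion.star_smul⟩

private lemma comp_hasDerivAt (L : Quaternion ℝ →ₗ[ℝ] ℝ) {f : ℝ → Quaternion ℝ}
    {f' : Quaternion ℝ} {t : ℝ} (hf : HasDerivAt f f' t) :
    HasDerivAt (fun s => L (f s)) (L f') t :=
  L.toContinuousLinearMap.hasFDerivAt.comp_hasDerivAt t hf

/-- For a differentiable curve `z` of unit quaternions, the Frobenius norm
of the derivative of the associated curve of rotations `Φ(t) = quatRot (z t)` equals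
`2√2 · |z'(t)|`; i.e. the covering map `π : S³ → SO(3)` satisfies `π*⟨·,·⟩ = 8⟨·,·⟩`. -/
theorem frobenius_norm_deriv_quatRot (z : ℝ → Quaternion ℝ) (hz : Differentiable ℝ z)
    (hnorm : ∀ t, ‖z t‖ = 1) (t : ℝ) :
    Real.sqrt (∑ i : Fin 3, ∑ j : Fin 3, (deriv (fun s => quatRot (z s) i j) t) ^ 2)
      = 2 * Real.sqrt 2 * ‖deriv z t‖ := by
  set w := deriv z t with hw
  have hz' : HasDerivAt z w t := (hz t).hasDerivAt
  have hstar : HasDerivAt (fun s => star (z s)) (star w) t := hz'.star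
  have key : ∀ j : Fin 3, HasDerivAt (fun s => z s * quatBasis j * star (z s))
      (w * quatBasis j * star (z t) + z t * quatBasis j * star w) t := fun j =>
    (hz'.mul_const (quatBasis j)).mul hstar
  have hd : ∀ i j, deriv (fun s => quatRot (z s) i j) t
      = imCoords (w * quatBasis j * star (z t) + z t * quatBasis j * star w) i := by
    intro i j
    fin_cases i
    · exact (comp_hasDerivAt (QuaternionAlgebra.imIₗ (-1 : ℝ) 0 (-1)) (key j)).deriv
    · exact (comp_hasDerivAt (QuaternionAlgebra.imJₗ (-1 : ℝ) 0 (-1)) (key j)).deriv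
    · exact (comp_hasDerivAt (QuaternionAlgebra.imKₗ (-1 : ℝ) 0 (-1)) (key j)).deriv
  -- the constraint from |z| = 1
  have hn : (z t).re ^ 2 + (z t).imI ^ 2 + (z t).imJ ^ 2 + (z t).imK ^ 2 = 1 := by
    have := Quaternion.normSq_eq_norm_mul_self (z t)
    rw [hnorm t, mul_one, Quaternion.normSq_def'] at this
    linarith [this]
  -- the orthogonality constraint ⟨z, z'⟩ = 0
  have hq : (w * star (z t) + z t * star w).re = 0 := by
    have h1 : HasDerivAt (fun s => Quaternion.normSq (z s))
        ((w * star (z t) + z t * star w).re) t :=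
      comp_hasDerivAt (QuaternionAlgebra.reₗ (-1 : ℝ) 0 (-1)) (hz'.mul hstar)
    have h2 : (fun s => Quaternion.normSq (z s)) = fun _ => (1 : ℝ) := by
      funext s
      rw [Quaternion.normSq_eq_norm_mul_self, hnorm s, mul_one]
    rw [h2] at h1
    exact h1.unique (hasDerivAt_const t 1)
  have hq' : (z t).re * w.re + (z t).imI * w.imI + (z t).imJ * w.imJ + (z t).imK * w.imK
      = 0 := by
    simp only [Quaternion.re_add, Quaternion.re_mul, Quaternion.re_star, Quaternion.imI_star,
      Quaternion.imJ_star, Quaternion.imK_star, mul_neg, neg_neg, sub_neg_eq_add] at hq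
    linarith [hq]
  have hS : (∑ i : Fin 3, ∑ j : Fin 3, (deriv (fun s => quatRot (z s) i j) t) ^ 2)
      = 8 * (w.re ^ 2 + w.imI ^ 2 + w.imJ ^ 2 + w.imK ^ 2) := by
    simp only [hd]
    simp only [imCoords, quatBasis, Fin.sum_univ_three, Matrix.cons_val_zero,
      Matrix.cons_val_one, Matrix.head_cons, Matrix.cons_val_two, Matrix.tail_cons,
      Quaternion.imI_add, Quaternion.imJ_add, Quaternion.imK_add,
      Quaternion.imI_mul, Quaternion.imJ_mul, Quaternion.imK_mul,
      Quaternion.re_mul, Quaternion.re_star, Quaternion.imI_star, Quaternion.imJ_star,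
      Quaternion.imK_star, Matrix.cons_val]
    ring_nf
    nlinarith [hn, hq', sq_nonneg ((z t).re * w.re), sq_nonneg w.re]
  rw [hS]
  have hnw : w.re ^ 2 + w.imI ^ 2 + w.imJ ^ 2 + w.imK ^ 2 = ‖w‖ * ‖w‖ := by
    rw [← Quaternion.normSq_eq_norm_mul_self, Quaternion.normSq_def']
  rw [hnw, show (8 : ℝ) * (‖w‖ * ‖w‖) = (2 * Real.sqrt 2 * ‖w‖) ^ 2 by
    rw [mul_pow, mul_pow, Real.sq_sqrt (by norm_num : (2:ℝ) ≥ 0)]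
    ring]
  exact Real.sqrt_sq (by positivity)
end
end

section
/- Let λ₂, λ₄, λ₆ ∈ [0, π/2] satisfy λ₂ + λ₄ + λ₆ = π, and let ρ₀ ∈ (0, π/2]. Then arcsin(cos ρ₀ · sin λ₂) + arcsin(cos ρ₀ · sin λ₄) + arcsin(cos ρ₀ · sin λ₆) ≥ π − 2ρ₀. -/
open Real Set

private lemma arcsin_concave_aux (c : ℝ) (hc0 : 0 ≤ c) (hc1 : c < 1) :
    ConcaveOn ℝ (Icc (0:ℝ) (π / 2)) (fun x => arcsin (c * sin x)) := by
  have hd : ∀ x : ℝ, HasDerivAt (fun x => arcsin (c * sin x))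
      (c * cos x / sqrt (1 - (c * sin x) ^ 2)) x := by
    intro x
    have hs1 := Real.sin_le_one x
    have hs2 := Real.neg_one_le_sin x
    have h1 : c * sin x ≠ -1 := by nlinarith
    have h2 : c * sin x ≠ 1 := by nlinarith
    have := (Real.hasDerivAt_arcsin h1 h2).comp x ((Real.hasDerivAt_sin x).const_mul c)
    refine this.congr_deriv ?_
    ring
  refine AntitoneOn.concaveOn_of_deriv (convex_Icc _ _) ?_ ?_ ?_
  · exact fun x _ => ((hd x).continuousAt).continuousWithinAt
  · exact fun x _ => (hd x).differentiableAt.differentiableWithinAt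
  · rw [interior_Icc]
    intro a ha b hb hab
    rw [(hd a).deriv, (hd b).deriv]
    have hsa1 := Real.sin_le_one a
    have hsb1 := Real.sin_le_one b
    have hsa0 : 0 ≤ sin a := Real.sin_nonneg_of_nonneg_of_le_pi ha.1.le (by linarith [ha.2, pi_pos])
    have hsab : sin a ≤ sin b :=
      Real.sin_le_sin_of_le_of_le_pi_div_two (by linarith [ha.1, pi_pos]) hb.2.le hab
    have hsb0 : 0 ≤ sin b := hsa0.trans hsab
    have hca : 0 ≤ cos a :=
      Real.cos_nonneg_of_neg_pi_div_two_le_of_le (by linarith [ha.1, pi_pos]) ha.2.le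
    have hcb : 0 ≤ cos b :=
      Real.cos_nonneg_of_neg_pi_div_two_le_of_le (by linarith [hb.1, pi_pos]) hb.2.le
    have hA : (0:ℝ) < 1 - (c * sin a) ^ 2 := by
      have h1 : 0 ≤ c * sin a := mul_nonneg hc0 hsa0
      have h2 : c * sin a < 1 := by nlinarith
      nlinarith
    have hB : (0:ℝ) < 1 - (c * sin b) ^ 2 := by
      have h1 : 0 ≤ c * sin b := mul_nonneg hc0 hsb0
      have h2 : c * sin b < 1 := by nlinarith
      nlinarith
    have hsA : 0 < sqrt (1 - (c * sin a) ^ 2) := Real.sqrt_pos.2 hA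
    have hsB : 0 < sqrt (1 - (c * sin b) ^ 2) := Real.sqrt_pos.2 hB
    have hsA2 : sqrt (1 - (c * sin a) ^ 2) ^ 2 = 1 - (c * sin a) ^ 2 := Real.sq_sqrt hA.le
    have hsB2 : sqrt (1 - (c * sin b) ^ 2) ^ 2 = 1 - (c * sin b) ^ 2 := Real.sq_sqrt hB.le
    rw [div_le_div_iff₀ hsB hsA]
    have hsq : (c * cos b * sqrt (1 - (c * sin a) ^ 2)) ^ 2
        ≤ (c * cos a * sqrt (1 - (c * sin b) ^ 2)) ^ 2 := by
      have hca2 : cos a ^ 2 = 1 - sin a ^ 2 := Real.cos_sq' a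
      have hcb2 : cos b ^ 2 = 1 - sin b ^ 2 := Real.cos_sq' b
      have e1 : (c * cos b * sqrt (1 - (c * sin a) ^ 2)) ^ 2
          = c ^ 2 * (1 - sin b ^ 2) * (1 - (c * sin a) ^ 2) := by
        rw [mul_pow (c * cos b), hsA2, mul_pow c (cos b), hcb2]
      have e2 : (c * cos a * sqrt (1 - (c * sin b) ^ 2)) ^ 2
          = c ^ 2 * (1 - sin a ^ 2) * (1 - (c * sin b) ^ 2) := by
        rw [mul_pow (c * cos a), hsB2, mul_pow c (cos a), hca2]
      rw [e1, e2]
      nlinarith [mul_nonneg (mul_nonneg (sq_nonneg c) (by nlinarith : (0:ℝ) ≤ 1 - c ^ 2))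
        (by nlinarith : (0:ℝ) ≤ sin b ^ 2 - sin a ^ 2)]
    exact le_of_pow_le_pow_left₀ two_ne_zero (by positivity) hsq

private lemma arcsin_key (c : ℝ) (hc0 : 0 ≤ c) (hc1 : c < 1) {x : ℝ}
    (hx : x ∈ Icc (0:ℝ) (π / 2)) :
    2 * x * arcsin c ≤ π * arcsin (c * sin x) := by
  have hπ : (0:ℝ) < π := pi_pos
  have hconc := arcsin_concave_aux c hc0 hc1
  have h0 : (0:ℝ) ∈ Icc (0:ℝ) (π / 2) := ⟨le_refl 0, by linarith⟩
  have hp : (π / 2) ∈ Icc (0:ℝ) (π / 2) := ⟨by linarith, le_refl _⟩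
  have hw1 : (0:ℝ) ≤ 1 - 2 * x / π := by
    rw [sub_nonneg, div_le_one hπ]; linarith [hx.2]
  have hw2 : (0:ℝ) ≤ 2 * x / π := div_nonneg (by linarith [hx.1]) hπ.le
  have hws : (1 - 2 * x / π) + 2 * x / π = 1 := by ring
  have := hconc.2 h0 hp hw1 hw2 hws
  simp only [smul_eq_mul, mul_zero, Real.sin_zero, Real.sin_pi_div_two, mul_one,
    Real.arcsin_zero, zero_add] at this
  have hxx : (2 * x / π) * (π / 2) = x := by field_simp
  rw [hxx] at this
  have h2 : (2 * x / π) * arcsin c ≤ arcsin (c * sin x) := by linarith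
  calc 2 * x * arcsin c = π * ((2 * x / π) * arcsin c) := by field_simp
    _ ≤ π * arcsin (c * sin x) := by nlinarith

/-- If `λ₂ + λ₄ + λ₆ = π` with each `λᵢ ∈ [0, π/2]`, and `ρ₀ ∈ (0, π/2]`,
then `arcsin(cos ρ₀ sin λ₂) + arcsin(cos ρ₀ sin λ₄) + arcsin(cos ρ₀ sin λ₆) ≥ π − 2ρ₀`. -/
theorem arcsin_sum_ge (l₂ l₄ l₆ ρ₀ : ℝ)
    (h₂ : l₂ ∈ Icc (0:ℝ) (π / 2)) (h₄ : l₄ ∈ Icc (0:ℝ) (π / 2))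
    (h₆ : l₆ ∈ Icc (0:ℝ) (π / 2)) (hsum : l₂ + l₄ + l₆ = π)
    (hρ₀ : ρ₀ ∈ Ioc (0:ℝ) (π / 2)) :
    π - 2 * ρ₀ ≤
      arcsin (cos ρ₀ * sin l₂) + arcsin (cos ρ₀ * sin l₄) + arcsin (cos ρ₀ * sin l₆) := by
  have hπ : (0:ℝ) < π := pi_pos
  have hc0 : 0 ≤ cos ρ₀ :=
    Real.cos_nonneg_of_neg_pi_div_two_le_of_le (by linarith [hρ₀.1]) hρ₀.2
  have hc1 : cos ρ₀ < 1 := by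
    have := Real.cos_lt_cos_of_nonneg_of_le_pi (le_refl 0) (by linarith [hρ₀.2]) hρ₀.1
    simpa using this
  have hA : arcsin (cos ρ₀) = π / 2 - ρ₀ := by
    rw [← Real.sin_pi_div_two_sub, Real.arcsin_sin (by linarith [hρ₀.2]) (by linarith [hρ₀.1])]
  have k₂ := arcsin_key (cos ρ₀) hc0 hc1 h₂
  have k₄ := arcsin_key (cos ρ₀) hc0 hc1 h₄
  have k₆ := arcsin_key (cos ρ₀) hc0 hc1 h₆
  rw [hA] at k₂ k₄ k₆
  have e : 2 * l₂ * (π / 2 - ρ₀) + 2 * l₄ * (π / 2 - ρ₀) + 2 * l₆ * (π / 2 - ρ₀)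
      = π * (π - 2 * ρ₀) := by linear_combination (π - 2 * ρ₀) * hsum
  nlinarith [k₂, k₄, k₆]
end

section
/- Let E be a real separable Hilbert space, D ⊆ E a dense linear subspace, V ⊆ E an open set, h : V → ℝⁿ a map of class C¹ whose derivative is surjective at every point of V, L = h⁻¹(0), and U an open subset of L in the subspace topology. Then for every k ∈ ℕ and every continuous map f : Sᵏ → U, there is a continuous homotopy F : [0,1] × Sᵏ → U with F(0,·) = f and F(1, Sᵏ) ⊆ D ∩ U. In particular, the set inclusion D ∩ U ↪ U induces surjections on all homotopy groups. -/
open Set Metric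

/-- Pointwise partition-of-unity convexity bound. -/
lemma pu_bound {ι : Type*} (s : Finset ι) {Z : Type*} [NormedAddCommGroup Z] [NormedSpace ℝ Z]
    (a : ι → ℝ) (ha : ∀ i ∈ s, 0 ≤ a i) (hpos : 0 < ∑ i ∈ s, a i)
    (z : ι → Z) (z₀ : Z) (ε : ℝ)
    (hz : ∀ i ∈ s, a i ≠ 0 → ‖z i - z₀‖ ≤ ε) :
    ‖(∑ i ∈ s, a i)⁻¹ • (∑ i ∈ s, a i • z i) - z₀‖ ≤ ε := by
  set σ : ℝ := ∑ i ∈ s, a i with hσ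
  have key : (σ:ℝ)⁻¹ • (∑ i ∈ s, a i • z i) - z₀
      = σ⁻¹ • (∑ i ∈ s, a i • (z i - z₀)) := by
    have h1 : ∑ i ∈ s, a i • (z i - z₀) = (∑ i ∈ s, a i • z i) - σ • z₀ := by
      simp [smul_sub, Finset.sum_sub_distrib, hσ, Finset.sum_smul]
    rw [h1, smul_sub, smul_smul, inv_mul_cancel₀ hpos.ne', one_smul]
  rw [key, norm_smul]
  have hb : ‖∑ i ∈ s, a i • (z i - z₀)‖ ≤ σ * ε := by
    calc ‖∑ i ∈ s, a i • (z i - z₀)‖ ≤ ∑ i ∈ s, ‖a i • (z i - z₀)‖ :=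
          norm_sum_le _ _
      _ ≤ ∑ i ∈ s, a i * ε := by
          apply Finset.sum_le_sum
          intro i hi
          rw [norm_smul, Real.norm_eq_abs, abs_of_nonneg (ha i hi)]
          rcases eq_or_ne (a i) 0 with h0 | h0
          · simp [h0]
          · exact mul_le_mul_of_nonneg_left (hz i hi h0) (ha i hi)
      _ = σ * ε := by rw [← Finset.sum_mul]
  have : ‖σ⁻¹‖ * ‖∑ i ∈ s, a i • (z i - z₀)‖ ≤ σ⁻¹ * (σ * ε) := by
    rw [Real.norm_eq_abs, abs_of_nonneg (inv_nonneg.mpr hpos.le)]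
    exact mul_le_mul_of_nonneg_left hb (inv_nonneg.mpr hpos.le)
  calc ‖σ⁻¹‖ * ‖∑ i ∈ s, a i • (z i - z₀)‖ ≤ σ⁻¹ * (σ * ε) := this
    _ = ε := by field_simp

set_option synthInstance.maxHeartbeats 400000 in
/-- A surjective continuous linear map onto a finite-dimensional space has an exact right
inverse with range inside any given dense submodule. -/
lemma exists_right_inverse_range_mem {E : Type*} [NormedAddCommGroup E] [NormedSpace ℝ E]
    {n : ℕ} (D : Submodule ℝ E) (hD : Dense (D : Set E))
    (A : E →L[ℝ] EuclideanSpace ℝ (Fin n)) (hA : Function.Surjective A) :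
    ∃ R : EuclideanSpace ℝ (Fin n) →L[ℝ] E,
      (∀ v, A (R v) = v) ∧ (∀ v, R v ∈ D) := by
  classical
  -- every vector of the target is the image of an element of D
  have hsur : ∀ v : EuclideanSpace ℝ (Fin n), ∃ d ∈ D, A d = v := by
    have hdense : Dense (A '' (D : Set E)) := by
      have h1 : (univ : Set (EuclideanSpace ℝ (Fin n))) ⊆ closure (A '' (D : Set E)) := by
        intro v _
        obtain ⟨u, hu⟩ := hA v
        have : v ∈ A '' closure (D : Set E) := ⟨u, by rw [hD.closure_eq]; trivial, hu⟩
        exact (image_closure_subset_closure_image A.continuous) this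
      rw [dense_iff_closure_eq]
      exact eq_univ_of_univ_subset h1
    -- the image is a submodule of a finite dimensional space, hence closed
    set P : Submodule ℝ (EuclideanSpace ℝ (Fin n)) :=
      D.map (A : E →ₗ[ℝ] EuclideanSpace ℝ (Fin n)) with hP
    have hPset : (P : Set (EuclideanSpace ℝ (Fin n))) = A '' (D : Set E) := by
      ext v; simp [hP, Submodule.mem_map]
    have hmap : Dense (P : Set (EuclideanSpace ℝ (Fin n))) := by rw [hPset]; exact hdense
    have hclosed : IsClosed (P : Set (EuclideanSpace ℝ (Fin n))) :=
      P.closed_of_finiteDimensional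
    intro v
    have : v ∈ (P : Set _) := by rw [← hclosed.closure_eq, hmap.closure_eq]; trivial
    obtain ⟨d, hd, hdv⟩ := this
    exact ⟨d, hd, hdv⟩
  set b := (EuclideanSpace.basisFun (Fin n) ℝ).toBasis with hb
  choose d hdD hdA using fun i => hsur (b i)
  set R₀ : EuclideanSpace ℝ (Fin n) →ₗ[ℝ] E := b.constr ℝ d with hR₀
  refine ⟨LinearMap.toContinuousLinearMap R₀, ?_, ?_⟩
  · -- A ∘ R = id, checked on the basis
    have hlin : (A : E →ₗ[ℝ] EuclideanSpace ℝ (Fin n)).comp R₀ = LinearMap.id := by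
      apply b.ext
      intro i
      simp [hR₀, Module.Basis.constr_basis, hdA i]
    intro v
    have := congrArg (fun L => L v) hlin
    simpa using this
  · intro v
    have hv : R₀ v = ∑ i, b.equivFun v i • d i := by
      rw [hR₀, Module.Basis.constr_apply_fintype]
    rw [LinearMap.coe_toContinuousLinearMap']
    rw [hv]
    exact Submodule.sum_mem D fun i _ => Submodule.smul_mem D _ (hdD i)

/-- Unique fixed point in a closed ball for a map that contracts with constant 1/2 and
almost fixes 0. -/
lemma exists_unique_fixed {X : Type*} [NormedAddCommGroup X] [NormedSpace ℝ X]
    [CompleteSpace X] {r : ℝ} (hr : 0 < r) (T : X → X)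
    (hlip : ∀ w ∈ closedBall (0:X) r, ∀ w' ∈ closedBall (0:X) r,
      ‖T w - T w'‖ ≤ (1/2) * ‖w - w'‖)
    (hT0 : ‖T 0‖ ≤ r/2) :
    ∃! w, w ∈ closedBall (0:X) r ∧ T w = w := by
  have h0mem : (0:X) ∈ closedBall (0:X) r := mem_closedBall_self hr.le
  have hself : ∀ w ∈ closedBall (0:X) r, T w ∈ closedBall (0:X) r := by
    intro w hw
    rw [mem_closedBall, dist_zero_right]
    calc ‖T w‖ ≤ ‖T w - T 0‖ + ‖T 0‖ := by
          simpa using norm_add_le (T w - T 0) (T 0)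
      _ ≤ (1/2) * ‖w - 0‖ + r/2 := add_le_add (hlip w hw 0 h0mem) hT0
      _ ≤ (1/2) * r + r/2 := by
          have : ‖w - 0‖ ≤ r := by simpa [dist_zero_right] using (mem_closedBall.mp hw)
          nlinarith
      _ = r := by ring
  haveI : CompleteSpace (closedBall (0:X) r) :=
    (Metric.isClosed_closedBall (x := (0:X)) (ε := r)).completeSpace_coe
  haveI : Nonempty (closedBall (0:X) r) := ⟨⟨0, h0mem⟩⟩
  set Tb : closedBall (0:X) r → closedBall (0:X) r :=
    fun a => ⟨T a.1, hself a.1 a.2⟩ with hTb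
  have hcontr : ContractingWith (1/2 : NNReal) Tb := by
    constructor
    · rw [← NNReal.coe_lt_coe]; norm_num
    · apply LipschitzWith.of_dist_le_mul
      intro a b
      have := hlip a.1 a.2 b.1 b.2
      simp only [hTb, Subtype.dist_eq, dist_eq_norm]
      push_cast
      simpa using this
  set fp := ContractingWith.fixedPoint Tb hcontr with hfp
  have hfpfix : Tb fp = fp := hcontr.fixedPoint_isFixedPt
  refine ⟨fp.1, ⟨fp.2, ?_⟩, ?_⟩
  · exact congrArg Subtype.val hfpfix
  · rintro w ⟨hwmem, hwfix⟩
    have : Tb ⟨w, hwmem⟩ = ⟨w, hwmem⟩ := Subtype.ext hwfix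
    have := hcontr.fixedPoint_unique' this hfpfix
    exact congrArg Subtype.val this

set_option maxHeartbeats 2000000 in
/-- Let `E` be a separable real Hilbert space, `D ⊆ E` a dense linear
subspace, `V ⊆ E` open, `h : V → ℝⁿ` of class `C¹` with surjective derivative everywhere on
`V`, `L = h⁻¹(0)` and `U` open in `L`. Then every continuous map `f : Sᵏ → U` is homotopic,
within `U`, to a map with values in `D ∩ U`; in particular `D ∩ U ↪ U` is surjective on all
homotopy groups. -/
theorem dense_subspace_homotopy_surjective
    {E : Type*} [NormedAddCommGroup E] [InnerProductSpace ℝ E] [CompleteSpace E]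
    [TopologicalSpace.SeparableSpace E]
    (n : ℕ) (D : Submodule ℝ E) (hD : Dense (D : Set E))
    (V : Set E) (hV : IsOpen V) (h : E → EuclideanSpace ℝ (Fin n))
    (hC1 : ContDiffOn ℝ 1 h V)
    (hsurj : ∀ x ∈ V, Function.Surjective (fderiv ℝ h x))
    (U : Set E) (hUL : U ⊆ {x ∈ V | h x = 0})
    (hUopen : ∃ W : Set E, IsOpen W ∧ U = {x ∈ V | h x = 0} ∩ W)
    (k : ℕ) (f : sphere (0 : EuclideanSpace ℝ (Fin (k + 1))) 1 → E)
    (hf : Continuous f) (hfU : ∀ x, f x ∈ U) :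
    ∃ F : ℝ → sphere (0 : EuclideanSpace ℝ (Fin (k + 1))) 1 → E,
      ContinuousOn (fun p : ℝ × sphere (0 : EuclideanSpace ℝ (Fin (k + 1))) 1 =>
        F p.1 p.2) (Icc 0 1 ×ˢ univ) ∧
      F 0 = f ∧
      (∀ s ∈ Icc (0:ℝ) 1, ∀ x, F s x ∈ U) ∧
      (∀ x, F 1 x ∈ (D : Set E) ∩ U) := by
  classical
  obtain ⟨W, hWopen, hUW⟩ := hUopen
  have hUV : ∀ {y}, y ∈ U → y ∈ V := fun hy => (hUL hy).1
  have hUh : ∀ {y}, y ∈ U → h y = 0 := fun hy => (hUL hy).2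
  have hUW' : ∀ {y}, y ∈ U → y ∈ W := by
    intro y hy; rw [hUW] at hy; exact hy.2
  have hdiff : ∀ z ∈ V, DifferentiableAt ℝ h z := fun z hz =>
    (hC1.differentiableOn one_ne_zero).differentiableAt (hV.mem_nhds hz)
  have hfderiv_cont : ContinuousOn (fun y => fderiv ℝ h y) V :=
    hC1.continuousOn_fderiv_of_isOpen hV le_rfl
  have hhcont : ContinuousOn h V := hC1.continuousOn
  -- the sphere is a nonempty compact space
  haveI : CompactSpace (sphere (0 : EuclideanSpace ℝ (Fin (k + 1))) 1) :=
    isCompact_iff_compactSpace.mp (isCompact_sphere 0 1)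
  have hCcomp : IsCompact (range f) := isCompact_range hf
  -- local data: at each point of range f, an exact right inverse of the derivative
  -- with range in D, valid on a small ball
  have loc : ∀ c ∈ range f, ∃ (Rc : EuclideanSpace ℝ (Fin n) →L[ℝ] E) (tc : ℝ), 0 < tc ∧
      (∀ v, Rc v ∈ D) ∧ ball c tc ⊆ V ∧ ball c tc ⊆ W ∧
      (∀ ξ ∈ ball c tc, ‖(fderiv ℝ h ξ).comp Rc -
        ContinuousLinearMap.id ℝ (EuclideanSpace ℝ (Fin n))‖ ≤ 1/2) ∧
      (∀ ξ ∈ ball c tc, ‖fderiv ℝ h ξ‖ ≤ ‖fderiv ℝ h c‖ + 1) := by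
    rintro c ⟨x, rfl⟩
    have hcU : f x ∈ U := hfU x
    have hcV : f x ∈ V := hUV hcU
    have hcW : f x ∈ W := hUW' hcU
    obtain ⟨Rc, hRinv, hRD⟩ :=
      exists_right_inverse_range_mem D hD (fderiv ℝ h (f x)) (hsurj _ hcV)
    set ε := (2 * (‖Rc‖ + 1))⁻¹ with hε
    have hεpos : 0 < ε := by positivity
    have hε1 : ε ≤ 1 := by
      rw [hε]
      rw [inv_le_one_iff₀]
      right
      nlinarith [norm_nonneg Rc]
    have hcontat : ContinuousAt (fun ξ => fderiv ℝ h ξ) (f x) :=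
      hfderiv_cont.continuousAt (hV.mem_nhds hcV)
    obtain ⟨t1, ht1pos, ht1⟩ := Metric.continuousAt_iff.mp hcontat ε hεpos
    obtain ⟨t2, ht2pos, ht2⟩ := Metric.isOpen_iff.mp (hV.inter hWopen) (f x) ⟨hcV, hcW⟩
    have hsub : ball (f x) (min t1 t2) ⊆ V ∩ W :=
      fun z hz => ht2 (mem_of_mem_of_subset hz (ball_subset_ball (min_le_right _ _)))
    have hnear : ∀ ξ ∈ ball (f x) (min t1 t2), ‖fderiv ℝ h ξ - fderiv ℝ h (f x)‖ < ε := by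
      intro ξ hξ
      have hd : dist ξ (f x) < t1 := lt_of_lt_of_le (mem_ball.mp hξ) (min_le_left _ _)
      have := ht1 hd
      rwa [dist_eq_norm] at this
    refine ⟨Rc, min t1 t2, lt_min ht1pos ht2pos, hRD,
      fun z hz => (hsub hz).1, fun z hz => (hsub hz).2, ?_, ?_⟩
    · intro ξ hξ
      have heq : (fderiv ℝ h ξ).comp Rc -
          ContinuousLinearMap.id ℝ (EuclideanSpace ℝ (Fin n)) =
          (fderiv ℝ h ξ - fderiv ℝ h (f x)).comp Rc := by
        rw [ContinuousLinearMap.sub_comp]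
        congr 1
        apply ContinuousLinearMap.ext
        intro v
        simp [hRinv v]
      rw [heq]
      have h2 : (2 * (‖Rc‖ + 1)) * ε = 1 := mul_inv_cancel₀ (by positivity)
      calc ‖(fderiv ℝ h ξ - fderiv ℝ h (f x)).comp Rc‖
          ≤ ‖fderiv ℝ h ξ - fderiv ℝ h (f x)‖ * ‖Rc‖ :=
            ContinuousLinearMap.opNorm_comp_le _ _
        _ ≤ ε * ‖Rc‖ := mul_le_mul_of_nonneg_right (hnear ξ hξ).le (norm_nonneg _)
        _ ≤ 1/2 := by nlinarith [norm_nonneg Rc, hεpos.le]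
    · intro ξ hξ
      have h1 : ‖fderiv ℝ h ξ‖ ≤ ‖fderiv ℝ h (f x)‖ + ‖fderiv ℝ h ξ - fderiv ℝ h (f x)‖ := by
        have := norm_add_le (fderiv ℝ h (f x)) (fderiv ℝ h ξ - fderiv ℝ h (f x))
        simpa using this
      have := hnear ξ hξ
      linarith
  choose! R t tpos hRD hbV hbW hest hKb using loc
  -- finite subcover of range f
  have hcov : range f ⊆ ⋃ c ∈ range f, ball c (t c / 4) := fun c hc =>
    mem_biUnion hc (mem_ball_self (by linarith [tpos c hc]))
  obtain ⟨C0, hC0sub, hC0fin, hC0cov⟩ := hCcomp.elim_finite_subcover_image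
    (fun c _ => isOpen_ball) hcov
  set Cf := hC0fin.toFinset with hCf
  have hCfC : ∀ c ∈ Cf, c ∈ range f := fun c hc => hC0sub (hC0fin.mem_toFinset.mp hc)
  -- nonempty sphere gives nonempty Cf
  have hx0 : (EuclideanSpace.single (0 : Fin (k+1)) (1:ℝ)) ∈
      sphere (0 : EuclideanSpace ℝ (Fin (k + 1))) 1 := by
    rw [mem_sphere_zero_iff_norm, EuclideanSpace.norm_single]
    norm_num
  obtain ⟨c0, hc0C0, hfc0⟩ := mem_iUnion₂.mp (hC0cov (mem_range_self (⟨_, hx0⟩ :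
    sphere (0 : EuclideanSpace ℝ (Fin (k + 1))) 1)))
  have hCfne : Cf.Nonempty := ⟨c0, hC0fin.mem_toFinset.mpr hc0C0⟩
  have hc0Cf : c0 ∈ Cf := hC0fin.mem_toFinset.mpr hc0C0
  -- constants
  set M := Cf.sup' hCfne (fun c => ‖R c‖) with hM
  have hMle : ∀ c ∈ Cf, ‖R c‖ ≤ M := by
    intro c hc; rw [hM]; exact Finset.le_sup' (fun c => ‖R c‖) hc
  have hM0 : 0 ≤ M := le_trans (norm_nonneg _) (hMle c0 hc0Cf)
  set K := Cf.sup' hCfne (fun c => ‖fderiv ℝ h c‖) + 1 with hK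
  have hKle : ∀ c ∈ Cf, ‖fderiv ℝ h c‖ + 1 ≤ K := by
    intro c hc
    have := Finset.le_sup' (fun c => ‖fderiv ℝ h c‖) hc
    rw [hK]; linarith
  have hK1 : 1 ≤ K := by
    have := le_trans (norm_nonneg _) (Finset.le_sup' (fun c => ‖fderiv ℝ h c‖) hc0Cf)
    rw [hK]; linarith
  set τ := Cf.inf' hCfne t with hτ
  have hτle : ∀ c ∈ Cf, τ ≤ t c := by
    intro c hc; rw [hτ]; exact Finset.inf'_le t hc
  have hτpos : 0 < τ := by
    obtain ⟨c, hc, hceq⟩ := Cf.exists_mem_eq_inf' hCfne t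
    rw [hτ, hceq]
    exact tpos c (hCfC c hc)
  set r := τ / (2 * (M + 1)) with hr
  have hrpos : 0 < r := by rw [hr]; positivity
  have hrmul : r * (2 * (M + 1)) = τ := div_mul_cancel₀ _ (by positivity)
  have hMr : M * r ≤ τ / 2 := by nlinarith [hrpos]
  set δ := min (τ/8) (r/(4*(K+1))) with hδ
  have hδpos : 0 < δ := lt_min (by positivity) (by positivity)
  have hδτ : 2*δ ≤ τ/4 := by
    have := min_le_left (τ/8) (r/(4*(K+1)))
    rw [hδ]; linarith
  have hδK : K * (2*δ) ≤ r/2 := by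
    have h1 : δ ≤ r/(4*(K+1)) := min_le_right _ _
    have h2 : r/(4*(K+1)) * (4*(K+1)) = r := div_mul_cancel₀ _ (by positivity)
    nlinarith [hδpos.le, hK1, hrpos.le]
  -- approximate f by a map into D, using a partition of unity on the sphere
  have hdense : ∀ x : sphere (0 : EuclideanSpace ℝ (Fin (k + 1))) 1,
      ∃ dx, dx ∈ D ∧ dist dx (f x) < δ := by
    intro x
    obtain ⟨dx, hdx1, hdx2⟩ := Metric.dense_iff.mp hD (f x) δ hδpos
    exact ⟨dx, hdx2, mem_ball.mp hdx1⟩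
  choose dd hddD hddf using hdense
  have hScov : (univ : Set (sphere (0 : EuclideanSpace ℝ (Fin (k + 1))) 1)) ⊆
      ⋃ x, f ⁻¹' (ball (f x) δ) := fun x _ =>
    mem_iUnion.mpr ⟨x, by simp only [mem_preimage]; exact mem_ball_self hδpos⟩
  obtain ⟨J, hJcov⟩ := isCompact_univ.elim_finite_subcover
    (fun x : sphere (0 : EuclideanSpace ℝ (Fin (k + 1))) 1 => f ⁻¹' (ball (f x) δ))
    (fun x => isOpen_ball.preimage hf) hScov
  set χ : sphere (0 : EuclideanSpace ℝ (Fin (k + 1))) 1 →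
      sphere (0 : EuclideanSpace ℝ (Fin (k + 1))) 1 → ℝ :=
    fun j x' => max (δ - dist (f x') (f j)) 0 with hχ
  have hχcont : ∀ j, Continuous (χ j) := fun j =>
    (continuous_const.sub ((hf.dist continuous_const))).max continuous_const
  have hχnn : ∀ j x', 0 ≤ χ j x' := fun j x' => le_max_right _ _
  have hχpos : ∀ j x', χ j x' ≠ 0 → dist (f x') (f j) < δ := by
    intro j x' hne
    by_contra hge
    push_neg at hge
    exact hne (by rw [hχ]; simp only [max_eq_right_iff]; linarith)
  set σS : sphere (0 : EuclideanSpace ℝ (Fin (k + 1))) 1 → ℝ :=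
    fun x' => ∑ j ∈ J, χ j x' with hσS
  have hσSpos : ∀ x', 0 < σS x' := by
    intro x'
    obtain ⟨j, hjJ, hj⟩ := mem_iUnion₂.mp (hJcov (mem_univ x'))
    have hjpos : 0 < χ j x' := by
      have hd : dist (f x') (f j) < δ := by simpa [mem_ball] using hj
      rw [hχ]
      simp only [lt_max_iff]
      left; linarith
    exact Finset.sum_pos' (fun i _ => hχnn i x') ⟨j, hjJ, hjpos⟩
  set g : sphere (0 : EuclideanSpace ℝ (Fin (k + 1))) 1 → E :=
    fun x' => (σS x')⁻¹ • ∑ j ∈ J, χ j x' • dd j with hg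
  have hgD : ∀ x', g x' ∈ D := fun x' =>
    Submodule.smul_mem _ _ (Submodule.sum_mem _ fun j _ => Submodule.smul_mem _ _ (hddD j))
  have hgf : ∀ x', ‖g x' - f x'‖ ≤ 2*δ := by
    intro x'
    apply pu_bound J (fun j => χ j x') (fun j _ => hχnn j x') (hσSpos x') dd (f x') (2*δ)
    intro j _ hne
    have h1 := hχpos j x' hne
    have h2 := hddf j
    have h3 : dist (dd j) (f x') ≤ dist (dd j) (f j) + dist (f j) (f x') := dist_triangle _ _ _
    rw [← dist_eq_norm]
    rw [dist_comm (f x') (f j)] at h1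
    linarith
  have hgcont : Continuous g := by
    apply Continuous.smul
    · exact (continuous_finset_sum _ fun j _ => hχcont j).inv₀ fun x' => (hσSpos x').ne'
    · exact continuous_finset_sum _ fun j _ => (hχcont j).smul continuous_const
  -- glue the local right inverses into a continuous family
  set ψ : E → E → ℝ := fun c y => max (t c / 2 - dist y c) 0 with hψ
  have hψcont : ∀ c, Continuous (fun y => ψ c y) := fun c =>
    (continuous_const.sub (continuous_id.dist continuous_const)).max continuous_const
  have hψnn : ∀ c y, 0 ≤ ψ c y := fun c y => le_max_right _ _
  have hψne : ∀ c y, ψ c y ≠ 0 → dist y c < t c / 2 := by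
    intro c y hne
    by_contra hge
    push_neg at hge
    exact hne (by rw [hψ]; simp only [max_eq_right_iff]; linarith)
  set σE : E → ℝ := fun y => ∑ c ∈ Cf, ψ c y with hσE
  have hσEcont : Continuous σE := continuous_finset_sum _ fun c _ => hψcont c
  set Bp : Set E := {y | ∃ c ∈ Cf, dist y c < t c / 2} with hBp
  have hσEpos : ∀ y ∈ Bp, 0 < σE y := by
    rintro y ⟨c, hc, hyc⟩
    have hcpos : 0 < ψ c y := by
      rw [hψ]; simp only [lt_max_iff]; left; linarith
    exact Finset.sum_pos' (fun i _ => hψnn i y) ⟨c, hc, hcpos⟩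
  set Rg : E → (EuclideanSpace ℝ (Fin n) →L[ℝ] E) :=
    fun y => (σE y)⁻¹ • ∑ c ∈ Cf, ψ c y • R c with hRg
  have hRgapp : ∀ y v, Rg y v = (σE y)⁻¹ • ∑ c ∈ Cf, ψ c y • (R c v) := by
    intro y v
    rw [hRg]
    simp [ContinuousLinearMap.sum_apply, ContinuousLinearMap.smul_apply]
  have hRgD : ∀ y v, Rg y v ∈ D := by
    intro y v
    rw [hRgapp]
    exact Submodule.smul_mem _ _
      (Submodule.sum_mem _ fun c hc => Submodule.smul_mem _ _ (hRD c (hCfC c hc) v))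
  have hRgM : ∀ y ∈ Bp, ∀ v : EuclideanSpace ℝ (Fin n), ‖Rg y v‖ ≤ M * ‖v‖ := by
    intro y hy v
    rw [hRgapp]
    have := pu_bound Cf (fun c => ψ c y) (fun c _ => hψnn c y) (hσEpos y hy)
      (fun c => R c v) 0 (M * ‖v‖) ?_
    · simpa using this
    · intro c hc _
      rw [sub_zero]
      calc ‖R c v‖ ≤ ‖R c‖ * ‖v‖ := (R c).le_opNorm v
        _ ≤ M * ‖v‖ := mul_le_mul_of_nonneg_right (hMle c hc) (norm_nonneg v)
  have hRgnorm : ∀ y ∈ Bp, ‖Rg y‖ ≤ M := fun y hy =>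
    ContinuousLinearMap.opNorm_le_bound _ hM0 (hRgM y hy)
  have hE3 : ∀ y ∈ Bp, ∀ ξ : E, dist ξ y ≤ τ/2 →
      ‖(fderiv ℝ h ξ).comp (Rg y) -
        ContinuousLinearMap.id ℝ (EuclideanSpace ℝ (Fin n))‖ ≤ 1/2 := by
    intro y hy ξ hξ
    apply ContinuousLinearMap.opNorm_le_bound _ (by norm_num)
    intro v
    have happ : ((fderiv ℝ h ξ).comp (Rg y) -
        ContinuousLinearMap.id ℝ (EuclideanSpace ℝ (Fin n))) v
        = (σE y)⁻¹ • (∑ c ∈ Cf, ψ c y • (fderiv ℝ h ξ (R c v))) - v := by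
      rw [ContinuousLinearMap.sub_apply, ContinuousLinearMap.comp_apply, hRgapp]
      simp [map_smul, map_sum]
    rw [happ]
    apply pu_bound Cf (fun c => ψ c y) (fun c _ => hψnn c y) (hσEpos y hy)
      (fun c => fderiv ℝ h ξ (R c v)) v (1/2 * ‖v‖)
    intro c hc hne
    have hdyc := hψne c y hne
    have hξc : ξ ∈ ball c (t c) := by
      rw [mem_ball]
      have h1 : dist ξ c ≤ dist ξ y + dist y c := dist_triangle _ _ _
      have h2 := hτle c hc
      linarith
    have hop := hest c (hCfC c hc) ξ hξc
    calc ‖fderiv ℝ h ξ (R c v) - v‖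
        = ‖((fderiv ℝ h ξ).comp (R c) -
            ContinuousLinearMap.id ℝ (EuclideanSpace ℝ (Fin n))) v‖ := by simp
      _ ≤ ‖(fderiv ℝ h ξ).comp (R c) -
            ContinuousLinearMap.id ℝ (EuclideanSpace ℝ (Fin n))‖ * ‖v‖ :=
          ContinuousLinearMap.le_opNorm _ v
      _ ≤ 1/2 * ‖v‖ := mul_le_mul_of_nonneg_right hop (norm_nonneg v)
  have hRgcont : ContinuousOn Rg Bp := by
    refine ContinuousOn.smul (f := fun y => (σE y)⁻¹) (g := fun y => ∑ c ∈ Cf, ψ c y • R c) ?_ ?_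
    · exact (hσEcont.continuousOn).inv₀ fun y hy => (hσEpos y hy).ne'
    · exact (continuous_finset_sum _ fun c _ => (hψcont c).smul continuous_const).continuousOn
  have hballmem : ∀ y ∈ Bp, ∀ z : E, dist z y ≤ τ/2 → z ∈ V ∧ z ∈ W := by
    rintro y ⟨c, hc, hyc⟩ z hz
    have hzc : z ∈ ball c (t c) := by
      rw [mem_ball]
      have h1 : dist z c ≤ dist z y + dist y c := dist_triangle _ _ _
      have h2 := hτle c hc
      linarith
    exact ⟨hbV c (hCfC c hc) hzc, hbW c (hCfC c hc) hzc⟩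
  -- the Newton correction: for y close to L, solve h (y + Rg y w) = 0
  set Om : Set E := {y | y ∈ Bp ∧ ‖h y‖ ≤ r/2} with hOm
  set T : E → EuclideanSpace ℝ (Fin n) → EuclideanSpace ℝ (Fin n) :=
    fun y w => w - h (y + Rg y w) with hT
  have hmemV : ∀ y ∈ Bp, ∀ u : EuclideanSpace ℝ (Fin n), u ∈ closedBall 0 r →
      (y + Rg y u) ∈ V ∧ dist (y + Rg y u) y ≤ τ/2 := by
    intro y hy u hu
    have h1 : dist (y + Rg y u) y = ‖Rg y u‖ := by
      rw [dist_eq_norm]; simp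
    have hur : ‖u‖ ≤ r := by
      have := mem_closedBall.mp hu; rwa [dist_zero_right] at this
    have h2 : ‖Rg y u‖ ≤ M * r :=
      le_trans (hRgM y hy u) (mul_le_mul_of_nonneg_left hur hM0)
    have h3 : dist (y + Rg y u) y ≤ τ/2 := by rw [h1]; linarith [hMr]
    exact ⟨(hballmem y hy _ h3).1, h3⟩
  have hTlip : ∀ y ∈ Om, ∀ w ∈ closedBall (0 : EuclideanSpace ℝ (Fin n)) r,
      ∀ w' ∈ closedBall (0 : EuclideanSpace ℝ (Fin n)) r,
      ‖T y w - T y w'‖ ≤ (1/2) * ‖w - w'‖ := by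
    rintro y ⟨hyB, _⟩ w hw w' hw'
    have hder : ∀ u ∈ closedBall (0 : EuclideanSpace ℝ (Fin n)) r,
        HasFDerivWithinAt (fun w => T y w)
          (ContinuousLinearMap.id ℝ (EuclideanSpace ℝ (Fin n)) -
            (fderiv ℝ h (y + Rg y u)).comp (Rg y)) (closedBall 0 r) u := by
      intro u hu
      have h1 : HasFDerivAt (fun w : EuclideanSpace ℝ (Fin n) => y + Rg y w) (Rg y) u :=
        ((Rg y).hasFDerivAt).const_add y
      have h2 : HasFDerivAt h (fderiv ℝ h (y + Rg y u)) (y + Rg y u) :=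
        (hdiff _ (hmemV y hyB u hu).1).hasFDerivAt
      have h3 : HasFDerivAt (fun w : EuclideanSpace ℝ (Fin n) => h (y + Rg y w))
          ((fderiv ℝ h (y + Rg y u)).comp (Rg y)) u := h2.comp u h1
      exact ((hasFDerivAt_id u).sub h3).hasFDerivWithinAt
    have hbound : ∀ u ∈ closedBall (0 : EuclideanSpace ℝ (Fin n)) r,
        ‖ContinuousLinearMap.id ℝ (EuclideanSpace ℝ (Fin n)) -
          (fderiv ℝ h (y + Rg y u)).comp (Rg y)‖ ≤ 1/2 := by
      intro u hu
      rw [norm_sub_rev]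
      exact hE3 y hyB _ (hmemV y hyB u hu).2
    exact (convex_closedBall (0 : EuclideanSpace ℝ (Fin n))
      r).norm_image_sub_le_of_norm_hasFDerivWithin_le hder hbound hw' hw
  have hT0 : ∀ y ∈ Om, ‖T y 0‖ ≤ r/2 := by
    rintro y ⟨_, hyh⟩
    have : T y 0 = - h y := by simp only [hT]; simp
    rw [this, norm_neg]
    exact hyh
  have hEU : ∀ y ∈ Om, ∃! w, w ∈ closedBall (0 : EuclideanSpace ℝ (Fin n)) r ∧
      h (y + Rg y w) = 0 := by
    intro y hy
    obtain ⟨w, ⟨hw1, hw2⟩, hwu⟩ := exists_unique_fixed hrpos (T y)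
      (fun w hw w' hw' => hTlip y hy w hw w' hw') (hT0 y hy)
    refine ⟨w, ⟨hw1, ?_⟩, ?_⟩
    · have : T y w = w := hw2
      simp only [hT] at this
      exact sub_eq_self.mp this
    · rintro w' ⟨h1, h2⟩
      exact hwu w' ⟨h1, by simp only [hT]; exact sub_eq_self.mpr h2⟩
  set ww : E → EuclideanSpace ℝ (Fin n) := fun y =>
    if hy : y ∈ Om then (hEU y hy).exists.choose else 0 with hww
  have hwwmem : ∀ y (hy : y ∈ Om),
      ww y ∈ closedBall (0 : EuclideanSpace ℝ (Fin n)) r ∧ h (y + Rg y (ww y)) = 0 := by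
    intro y hy
    have : ww y = (hEU y hy).exists.choose := by rw [hww]; simp only [dif_pos hy]
    rw [this]
    exact (hEU y hy).exists.choose_spec
  have hwwuniq : ∀ y (hy : y ∈ Om), ∀ w,
      w ∈ closedBall (0 : EuclideanSpace ℝ (Fin n)) r → h (y + Rg y w) = 0 → w = ww y := by
    intro y hy w h1 h2
    obtain ⟨w0, hw0, hu⟩ := hEU y hy
    rw [hu w ⟨h1, h2⟩, hu (ww y) (hwwmem y hy)]
  have hwwcont : ∀ y₀ ∈ Om, ContinuousWithinAt ww Om y₀ := by
    intro y₀ hy₀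
    have hw₀ := hwwmem y₀ hy₀
    have hkey : ∀ y ∈ Om, ‖ww y - ww y₀‖ ≤ 2 * ‖h (y + Rg y (ww y₀))‖ := by
      intro y hy
      have hfix : T y (ww y) = ww y := by simp only [hT]; exact sub_eq_self.mpr (hwwmem y hy).2
      have hsplit : ww y - ww y₀ = (T y (ww y) - T y (ww y₀)) + (T y (ww y₀) - ww y₀) := by
        rw [hfix]; abel
      have h1 : ‖ww y - ww y₀‖ ≤ ‖T y (ww y) - T y (ww y₀)‖ + ‖T y (ww y₀) - ww y₀‖ := by
        rw [hsplit]; exact norm_add_le _ _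
      have h2 : ‖T y (ww y) - T y (ww y₀)‖ ≤ (1/2) * ‖ww y - ww y₀‖ :=
        hTlip y hy _ (hwwmem y hy).1 _ hw₀.1
      have h3 : T y (ww y₀) - ww y₀ = - h (y + Rg y (ww y₀)) := by simp only [hT]; abel
      rw [h3, norm_neg] at h1
      linarith
    have hcont1 : ContinuousWithinAt (fun y => h (y + Rg y (ww y₀))) Om y₀ := by
      have hRcwa : ContinuousWithinAt Rg Om y₀ :=
        (hRgcont y₀ hy₀.1).mono (fun y hy => hy.1)
      have happ : ContinuousWithinAt (fun y => Rg y (ww y₀)) Om y₀ := by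
        have hpair : ContinuousWithinAt (fun y => (Rg y, ww y₀)) Om y₀ :=
          hRcwa.prodMk continuousWithinAt_const
        exact (isBoundedBilinearMap_apply.continuous.continuousAt).comp_continuousWithinAt hpair
      have hin : ContinuousWithinAt (fun y => y + Rg y (ww y₀)) Om y₀ :=
        continuousWithinAt_id.add happ
      have hmaps : MapsTo (fun y => y + Rg y (ww y₀)) Om V :=
        fun y hy => (hmemV y hy.1 (ww y₀) hw₀.1).1
      exact ContinuousWithinAt.comp (hhcont _ ((hmemV y₀ hy₀.1 (ww y₀) hw₀.1).1)) hin hmaps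
    have htend : Filter.Tendsto (fun y => 2 * ‖h (y + Rg y (ww y₀))‖)
        (nhdsWithin y₀ Om) (nhds 0) := by
      have h0 : h (y₀ + Rg y₀ (ww y₀)) = 0 := hw₀.2
      have h1 : Filter.Tendsto (fun y => h (y + Rg y (ww y₀)))
          (nhdsWithin y₀ Om) (nhds 0) := by
        have := hcont1.tendsto
        rwa [h0] at this
      have h2 := h1.norm
      rw [norm_zero] at h2
      simpa using h2.const_mul 2
    rw [ContinuousWithinAt, tendsto_iff_dist_tendsto_zero]
    apply squeeze_zero' (Filter.Eventually.of_forall fun y => dist_nonneg) ?_ htend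
    filter_upwards [self_mem_nhdsWithin] with y hy
    rw [dist_eq_norm]
    exact hkey y hy
  -- the straight-line homotopy, corrected back onto the level set
  set G : ℝ → sphere (0 : EuclideanSpace ℝ (Fin (k + 1))) 1 → E :=
    fun s x => f x + s • (g x - f x) with hG
  have hGd : ∀ s ∈ Icc (0:ℝ) 1, ∀ x, dist (G s x) (f x) ≤ 2*δ := by
    intro s hs x
    rw [dist_eq_norm]
    have hGsub : G s x - f x = s • (g x - f x) := by simp only [hG]; abel
    rw [hGsub, norm_smul, Real.norm_eq_abs, abs_of_nonneg hs.1]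
    calc s * ‖g x - f x‖ ≤ 1 * (2*δ) :=
        mul_le_mul hs.2 (hgf x) (norm_nonneg _) zero_le_one
      _ = 2*δ := one_mul _
  have hGOm : ∀ s ∈ Icc (0:ℝ) 1, ∀ x, G s x ∈ Om := by
    intro s hs x
    obtain ⟨c, hc0, hfxc⟩ := mem_iUnion₂.mp (hC0cov (mem_range_self x))
    have hcCf : c ∈ Cf := hC0fin.mem_toFinset.mpr hc0
    have hfxc' : dist (f x) c < t c / 4 := mem_ball.mp hfxc
    have hτtc := hτle c hcCf
    have hdG := hGd s hs x
    have htri : dist (G s x) c ≤ dist (G s x) (f x) + dist (f x) c := dist_triangle _ _ _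
    have hGc : dist (G s x) c < t c / 2 := by linarith
    have hBpmem : G s x ∈ Bp := ⟨c, hcCf, hGc⟩
    -- bound ‖h (G s x)‖ via the mean value inequality on ball c (t c)
    have htcpos := tpos c (hCfC c hcCf)
    have hfxball : f x ∈ ball c (t c) := by rw [mem_ball]; linarith
    have hGball : G s x ∈ ball c (t c) := by rw [mem_ball]; linarith
    have hMVT : ‖h (G s x) - h (f x)‖ ≤ K * ‖G s x - f x‖ := by
      apply (convex_ball c (t c)).norm_image_sub_le_of_norm_hasFDerivWithin_le
        (f' := fun ξ => fderiv ℝ h ξ) ?_ ?_ hfxball hGball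
      · intro ξ hξ
        exact (hdiff ξ (hbV c (hCfC c hcCf) hξ)).hasFDerivAt.hasFDerivWithinAt
      · intro ξ hξ
        have h1 := hKb c (hCfC c hcCf) ξ hξ
        have h2 := hKle c hcCf
        linarith
    have hfx0 : h (f x) = 0 := hUh (hfU x)
    have hHG : ‖h (G s x)‖ ≤ r/2 := by
      rw [hfx0, sub_zero] at hMVT
      have hd2 : ‖G s x - f x‖ ≤ 2*δ := by rw [← dist_eq_norm]; exact hdG
      have : K * ‖G s x - f x‖ ≤ K * (2*δ) :=
        mul_le_mul_of_nonneg_left hd2 (by linarith)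
      exact le_trans hMVT (le_trans this hδK)
    exact ⟨hBpmem, hHG⟩
  -- the homotopy
  have hmemU : ∀ s ∈ Icc (0:ℝ) 1, ∀ x, G s x + Rg (G s x) (ww (G s x)) ∈ U := by
    intro s hs x
    have hyOm : G s x ∈ Om := hGOm s hs x
    have hyB : G s x ∈ Bp := hyOm.1
    have hwmem := (hwwmem _ hyOm).1
    have hF0 : h (G s x + Rg (G s x) (ww (G s x))) = 0 := (hwwmem _ hyOm).2
    have hd : dist (G s x + Rg (G s x) (ww (G s x))) (G s x) ≤ τ/2 :=
      (hmemV _ hyB _ hwmem).2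
    obtain ⟨hVmem, hWmem⟩ := hballmem _ hyB _ hd
    rw [hUW]
    exact ⟨⟨hVmem, hF0⟩, hWmem⟩
  refine ⟨fun s x => G s x + Rg (G s x) (ww (G s x)), ?_, ?_, ?_, ?_⟩
  · -- continuity
    have hGGcont : Continuous (fun p : ℝ ×
        sphere (0 : EuclideanSpace ℝ (Fin (k + 1))) 1 => G p.1 p.2) := by
      simp only [hG]
      exact (hf.comp continuous_snd).add
        (continuous_fst.smul ((hgcont.comp continuous_snd).sub (hf.comp continuous_snd)))
    intro p hp
    rw [mem_prod] at hp
    have hpOm : G p.1 p.2 ∈ Om := hGOm p.1 hp.1 p.2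
    have hGcwa : ContinuousWithinAt (fun p : ℝ ×
        sphere (0 : EuclideanSpace ℝ (Fin (k + 1))) 1 => G p.1 p.2)
        (Icc 0 1 ×ˢ univ) p := hGGcont.continuousWithinAt
    have hmapsTo : MapsTo (fun p : ℝ ×
        sphere (0 : EuclideanSpace ℝ (Fin (k + 1))) 1 => G p.1 p.2)
        (Icc 0 1 ×ˢ univ) Om := by
      intro q hq
      rw [mem_prod] at hq
      exact hGOm q.1 hq.1 q.2
    have hRcwa : ContinuousWithinAt (fun p : ℝ ×
        sphere (0 : EuclideanSpace ℝ (Fin (k + 1))) 1 => Rg (G p.1 p.2))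
        (Icc 0 1 ×ˢ univ) p := by
      have := ContinuousWithinAt.comp (f := fun p : ℝ ×
          sphere (0 : EuclideanSpace ℝ (Fin (k + 1))) 1 => G p.1 p.2) (g := Rg)
        ((hRgcont _ hpOm.1).mono fun y hy => hy.1) hGcwa hmapsTo
      exact this
    have hwcwa : ContinuousWithinAt (fun p : ℝ ×
        sphere (0 : EuclideanSpace ℝ (Fin (k + 1))) 1 => ww (G p.1 p.2))
        (Icc 0 1 ×ˢ univ) p := by
      have := ContinuousWithinAt.comp (f := fun p : ℝ ×
          sphere (0 : EuclideanSpace ℝ (Fin (k + 1))) 1 => G p.1 p.2) (g := ww)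
        (hwwcont _ hpOm) hGcwa hmapsTo
      exact this
    have happly : ContinuousWithinAt (fun p : ℝ ×
        sphere (0 : EuclideanSpace ℝ (Fin (k + 1))) 1 =>
        Rg (G p.1 p.2) (ww (G p.1 p.2))) (Icc 0 1 ×ˢ univ) p :=
      (isBoundedBilinearMap_apply.continuous.continuousAt).comp_continuousWithinAt
        (hRcwa.prodMk hwcwa)
    exact hGcwa.add happly
  · -- F 0 = f
    funext x
    show G 0 x + Rg (G 0 x) (ww (G 0 x)) = f x
    have h00 : G 0 x = f x := by simp [hG]
    have hfxOm : f x ∈ Om := h00 ▸ hGOm 0 (left_mem_Icc.mpr zero_le_one) x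
    have hz : (0 : EuclideanSpace ℝ (Fin n)) = ww (f x) := by
      apply hwwuniq (f x) hfxOm 0 (mem_closedBall_self hrpos.le)
      rw [map_zero, add_zero]
      exact hUh (hfU x)
    rw [h00, ← hz, map_zero, add_zero]
  · -- stays in U
    exact hmemU
  · -- lands in D ∩ U
    intro x
    refine ⟨?_, hmemU 1 (right_mem_Icc.mpr zero_le_one) x⟩
    have h11 : G 1 x = g x := by simp [hG]
    exact Submodule.add_mem _ (by rw [h11]; exact hgD x) (hRgD _ _)
end
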